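/- arXiv:1712.08152 — 5 statements merged into one kernel-verified Lean document; each statement's English description precedes it below -/
import Mathlib

section
/- Let T ∈ (0, ∞), N ∈ ℕ, h = T/N, p ∈ [2, ∞) and σ ∈ (0, 1). For θ ∈ [0, 1] define the shifted grid points θ_j = (j − 1 + θ)h for j ∈ {1, …, N} and θ_{N+1} = T. Then for every Borel measurable function φ : [0, T] × [0, T] → [0, ∞] one has ∫₀¹ Σ_{j=1}^N ∫_{θ_j}^{θ_{j+1}} φ(t, θ_j) dt dθ ≤ h^{pσ} ∫₀^T ∫₀^T φ(t, s) / |t − s|^{1 + pσ} ds dt. -/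
open MeasureTheory Finset ENNReal

lemma aux_subst (h : ℝ) (hh : 0 < h) (c : ℝ) (g : ℝ → ℝ≥0∞) (hg : Measurable g) :
    (∫⁻ θ in Set.Icc (0:ℝ) 1, g ((c + θ) * h)) =
      ENNReal.ofReal h⁻¹ * ∫⁻ s in Set.Ioc (c*h) ((c+1)*h), g s := by
  have hmeas : Measurable (fun θ : ℝ => (c + θ) * h) :=
    (measurable_id.const_add c).mul_const h
  have hmap : Measure.map (fun θ : ℝ => (c + θ) * h) volume
      = ENNReal.ofReal h⁻¹ • volume := by
    have hcomp : (fun θ : ℝ => (c + θ) * h) = (fun x : ℝ => c * h + x) ∘ (fun θ => h * θ) := by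
      ext θ; simp [Function.comp]; ring
    rw [hcomp, ← Measure.map_map (measurable_const_add _) (measurable_const_mul h),
      Real.map_volume_mul_left (ne_of_gt hh), Measure.map_smul]
    rw [show (fun x : ℝ => c * h + x) = (c * h + ·) from rfl, map_add_left_eq_self]
    rw [abs_of_pos (inv_pos.2 hh)]
  have key : ∀ θ : ℝ, Set.indicator (Set.Icc (0:ℝ) 1) (fun θ => g ((c + θ) * h)) θ
      = Set.indicator (Set.Icc (c*h) ((c+1)*h)) g ((c + θ) * h) := by
    intro θ
    by_cases hθ : θ ∈ Set.Icc (0:ℝ) 1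
    · rw [Set.indicator_of_mem hθ, Set.indicator_of_mem]
      obtain ⟨h0, h1⟩ := hθ
      constructor <;> nlinarith
    · rw [Set.indicator_of_notMem hθ, Set.indicator_of_notMem]
      intro hmem
      obtain ⟨h0, h1⟩ := hmem
      exact hθ ⟨by nlinarith, by nlinarith⟩
  calc ∫⁻ θ in Set.Icc (0:ℝ) 1, g ((c + θ) * h)
      = ∫⁻ θ, Set.indicator (Set.Icc (0:ℝ) 1) (fun θ => g ((c + θ) * h)) θ := by
        rw [lintegral_indicator measurableSet_Icc]
    _ = ∫⁻ θ, Set.indicator (Set.Icc (c*h) ((c+1)*h)) g ((c + θ) * h) := by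
        simp_rw [key]
    _ = ∫⁻ x, Set.indicator (Set.Icc (c*h) ((c+1)*h)) g x
          ∂(Measure.map (fun θ : ℝ => (c + θ) * h) volume) := by
        rw [lintegral_map (hg.indicator measurableSet_Icc) hmeas]
    _ = ENNReal.ofReal h⁻¹ * ∫⁻ x, Set.indicator (Set.Icc (c*h) ((c+1)*h)) g x := by
        rw [hmap, lintegral_smul_measure, smul_eq_mul]
    _ = ENNReal.ofReal h⁻¹ * ∫⁻ s in Set.Icc (c*h) ((c+1)*h), g s := by
        rw [lintegral_indicator measurableSet_Icc]
    _ = ENNReal.ofReal h⁻¹ * ∫⁻ s in Set.Ioc (c*h) ((c+1)*h), g s := by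
        rw [restrict_Ioc_eq_restrict_Icc]

/-- Key randomization estimate: averaging the shift parameter `θ` uniformly over `[0,1]`
converts local increments on the randomly shifted grid `θ_j = (j - 1 + θ)h`, `θ_{N+1} = T`,
into the Sobolev–Slobodeckij double integral:
`∫₀¹ ∑_{j=1}^N ∫_{θ_j}^{θ_{j+1}} φ(t, θ_j) dt dθ ≤ h^{pσ} ∫₀^T ∫₀^T φ(t,s)/|t-s|^{1+pσ} ds dt`. -/
theorem randomized_shift_estimate (T : ℝ) (hT : 0 < T) (N : ℕ) (hN : 1 ≤ N)
    (h : ℝ) (hh : h = T / N) (p σ : ℝ) (hp : 2 ≤ p) (hσ : σ ∈ Set.Ioo (0 : ℝ) 1)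
    (φ : ℝ → ℝ → ℝ≥0∞) (hφ : Measurable (Function.uncurry φ)) :
    (∫⁻ θ in Set.Icc (0 : ℝ) 1,
        ∑ j ∈ Finset.Icc 1 N,
          ∫⁻ t in Set.Ioc (((j : ℝ) - 1 + θ) * h)
              (if j = N then T else ((j : ℝ) + θ) * h),
            φ t (((j : ℝ) - 1 + θ) * h)) ≤
      ENNReal.ofReal (h ^ (p * σ)) *
        ∫⁻ t in Set.Ioc (0 : ℝ) T, ∫⁻ s in Set.Ioc (0 : ℝ) T,
          φ t s / ENNReal.ofReal (|t - s| ^ (1 + p * σ)) := by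
  obtain ⟨hσ0, hσ1⟩ := hσ
  have hN0 : (0:ℝ) < (N:ℝ) := by exact_mod_cast hN
  have hh0 : 0 < h := by rw [hh]; positivity
  have hTN : (N:ℝ) * h = T := by rw [hh]; field_simp
  have hp0 : 0 < p := lt_of_lt_of_le two_pos hp
  have hps : 0 < p * σ := mul_pos hp0 hσ0
  set F : ℝ → ℝ → ℝ≥0∞ := fun s t => (Set.Ioc s (s+h)).indicator (fun u => φ u s) t with hFdef
  set g : ℝ → ℝ≥0∞ := fun s => ∫⁻ t in Set.Ioc (0:ℝ) T, F s t with hgdef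
  have hFmeas : Measurable (Function.uncurry F) := by
    have heq : Function.uncurry F = Set.indicator {q : ℝ × ℝ | q.1 < q.2 ∧ q.2 ≤ q.1 + h}
        (fun q => φ q.2 q.1) := by
      ext q
      simp [hFdef, Function.uncurry, Set.indicator_apply, Set.mem_Ioc]
    rw [heq]
    exact (hφ.comp (measurable_snd.prodMk measurable_fst)).indicator
      ((measurableSet_lt measurable_fst measurable_snd).inter
        (measurableSet_le measurable_snd (measurable_fst.add_const h)))
  have hgmeas : Measurable g := by
    have heq : g = fun s => ∫⁻ t, (Set.Ioc (0:ℝ) T).indicator (F s) t := by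
      funext s; rw [hgdef]; rw [lintegral_indicator measurableSet_Ioc]
    rw [heq]
    have hG : Measurable (fun q : ℝ × ℝ => (Set.Ioc (0:ℝ) T).indicator (F q.1) q.2) := by
      have heq2 : (fun q : ℝ × ℝ => (Set.Ioc (0:ℝ) T).indicator (F q.1) q.2)
          = Set.indicator {q : ℝ × ℝ | 0 < q.2 ∧ q.2 ≤ T} (Function.uncurry F) := by
        ext q; simp [Set.indicator_apply, Set.mem_Ioc, Function.uncurry]
      rw [heq2]
      exact hFmeas.indicator
        ((measurableSet_lt measurable_const measurable_snd).inter
          (measurableSet_le measurable_snd measurable_const))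
    exact hG.lintegral_prod_right'
  -- Step A: pointwise bound of inner integral by g
  have claim : ∀ θ ∈ Set.Icc (0:ℝ) 1, ∀ j ∈ Finset.Icc 1 N,
      (∫⁻ t in Set.Ioc (((j:ℝ) - 1 + θ) * h) (if j = N then T else ((j:ℝ) + θ) * h),
        φ t (((j:ℝ) - 1 + θ) * h)) ≤ g (((j:ℝ) - 1 + θ) * h) := by
    intro θ hθ j hj
    obtain ⟨hθ0, hθ1⟩ := hθ
    rw [Finset.mem_Icc] at hj
    obtain ⟨hj1, hjN⟩ := hj
    set s := ((j:ℝ) - 1 + θ) * h with hs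
    have hj1' : (1:ℝ) ≤ (j:ℝ) := by exact_mod_cast hj1
    have hjN' : (j:ℝ) ≤ (N:ℝ) := by exact_mod_cast hjN
    have hs0 : 0 ≤ s := by
      apply mul_nonneg _ hh0.le; linarith
    have hsub : Set.Ioc s (if j = N then T else ((j:ℝ) + θ) * h)
        ⊆ Set.Ioc (0:ℝ) T ∩ Set.Ioc s (s + h) := by
      intro t ht
      obtain ⟨ht1, ht2⟩ := ht
      split_ifs at ht2 with hcase
      · have hjN'' : (j:ℝ) = (N:ℝ) := by exact_mod_cast hcase
        refine ⟨⟨lt_of_le_of_lt hs0 ht1, ht2⟩, ht1, ?_⟩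
        have hsh : s + h = ((N:ℝ) + θ) * h := by rw [hs, hjN'']; ring
        have : T ≤ s + h := by
          rw [hsh, ← hTN]; nlinarith
        linarith
      · have hjlt : (j:ℝ) + 1 ≤ (N:ℝ) := by
          have : j < N := lt_of_le_of_ne hjN hcase
          exact_mod_cast this
        refine ⟨⟨lt_of_le_of_lt hs0 ht1, ?_⟩, ht1, ?_⟩
        · have : ((j:ℝ)+θ)*h ≤ (N:ℝ)*h := by nlinarith
          linarith [hTN ▸ this]
        · have : ((j:ℝ)+θ)*h = s + h := by rw [hs]; ring
          linarith
    calc (∫⁻ t in Set.Ioc s (if j = N then T else ((j:ℝ) + θ) * h), φ t s)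
        ≤ ∫⁻ t in Set.Ioc (0:ℝ) T ∩ Set.Ioc s (s+h), φ t s :=
          lintegral_mono' (Measure.restrict_mono hsub le_rfl) le_rfl
      _ = g s := by
          rw [hgdef]
          simp only [hFdef]
          rw [lintegral_indicator measurableSet_Ioc,
            Measure.restrict_restrict measurableSet_Ioc, Set.inter_comm]
  -- Step B + C + D: integrate in θ and substitute
  have stepBCD : (∫⁻ θ in Set.Icc (0 : ℝ) 1,
        ∑ j ∈ Finset.Icc 1 N,
          ∫⁻ t in Set.Ioc (((j : ℝ) - 1 + θ) * h)
              (if j = N then T else ((j : ℝ) + θ) * h),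
            φ t (((j : ℝ) - 1 + θ) * h))
      ≤ ENNReal.ofReal h⁻¹ * ∫⁻ s in Set.Ioc (0:ℝ) T, g s := by
    have hdisj : Set.PairwiseDisjoint (↑(Finset.Icc 1 N))
        (fun j : ℕ => Set.Ioc (((j:ℝ)-1)*h) ((j:ℝ)*h)) := by
      intro i hi j hj hij
      have : min ((i:ℝ)*h) ((j:ℝ)*h) ≤ max (((i:ℝ)-1)*h) (((j:ℝ)-1)*h) := by
        rcases lt_or_gt_of_ne hij with hlt | hlt
        · have : (i:ℝ) + 1 ≤ (j:ℝ) := by exact_mod_cast hlt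
          refine le_trans (min_le_left _ _) (le_trans ?_ (le_max_right _ _))
          nlinarith
        · have : (j:ℝ) + 1 ≤ (i:ℝ) := by exact_mod_cast hlt
          refine le_trans (min_le_right _ _) (le_trans ?_ (le_max_left _ _))
          nlinarith
      exact Set.Ioc_disjoint_Ioc.mpr this
    have hunion : ∀ j ∈ Finset.Icc 1 N,
        Set.Ioc (((j:ℝ)-1)*h) ((j:ℝ)*h) ⊆ Set.Ioc (0:ℝ) T := by
      intro j hj
      rw [Finset.mem_Icc] at hj
      have hj1' : (1:ℝ) ≤ (j:ℝ) := by exact_mod_cast hj.1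
      have hjN' : (j:ℝ) ≤ (N:ℝ) := by exact_mod_cast hj.2
      apply Set.Ioc_subset_Ioc
      · nlinarith
      · rw [← hTN]; nlinarith
    calc (∫⁻ θ in Set.Icc (0 : ℝ) 1,
          ∑ j ∈ Finset.Icc 1 N,
            ∫⁻ t in Set.Ioc (((j : ℝ) - 1 + θ) * h)
                (if j = N then T else ((j : ℝ) + θ) * h),
              φ t (((j : ℝ) - 1 + θ) * h))
        ≤ ∫⁻ θ in Set.Icc (0:ℝ) 1, ∑ j ∈ Finset.Icc 1 N, g (((j:ℝ) - 1 + θ) * h) :=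
          setLIntegral_mono' measurableSet_Icc
            (fun θ hθ => Finset.sum_le_sum (fun j hj => claim θ hθ j hj))
      _ = ∑ j ∈ Finset.Icc 1 N, ∫⁻ θ in Set.Icc (0:ℝ) 1, g (((j:ℝ) - 1 + θ) * h) :=
          lintegral_finset_sum _ (fun j _ =>
            hgmeas.comp ((measurable_id.const_add ((j:ℝ) - 1)).mul_const h))
      _ = ∑ j ∈ Finset.Icc 1 N,
            ENNReal.ofReal h⁻¹ * ∫⁻ s in Set.Ioc (((j:ℝ)-1)*h) ((j:ℝ)*h), g s := by
          refine Finset.sum_congr rfl (fun j _ => ?_)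
          have := aux_subst h hh0 ((j:ℝ)-1) g hgmeas
          rw [show ((j:ℝ) - 1 + 1) = (j:ℝ) by ring] at this
          exact this
      _ = ENNReal.ofReal h⁻¹ *
            ∑ j ∈ Finset.Icc 1 N, ∫⁻ s in Set.Ioc (((j:ℝ)-1)*h) ((j:ℝ)*h), g s := by
          rw [Finset.mul_sum]
      _ ≤ ENNReal.ofReal h⁻¹ * ∫⁻ s in Set.Ioc (0:ℝ) T, g s := by
          apply mul_le_mul_right
          rw [← lintegral_biUnion_finset hdisj (fun j _ => measurableSet_Ioc) g]
          exact lintegral_mono' (Measure.restrict_mono (Set.iUnion₂_subset hunion) le_rfl) le_rfl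
  -- Step E: compare with the Sobolev–Slobodeckij kernel
  have pointwise : ∀ s t : ℝ, ENNReal.ofReal h⁻¹ * F s t
      ≤ ENNReal.ofReal (h ^ (p*σ)) *
        (φ t s / ENNReal.ofReal (|t - s| ^ (1 + p*σ))) := by
    intro s t
    by_cases hmem : t ∈ Set.Ioc s (s+h)
    · rw [show F s t = φ t s from by rw [hFdef]; exact Set.indicator_of_mem hmem _]
      obtain ⟨h1, h2⟩ := hmem
      have h3 : 0 < t - s := sub_pos.2 h1
      have habs : |t - s| = t - s := abs_of_pos h3
      have h4 : t - s ≤ h := by linarith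
      have hle : |t-s| ^ (1+p*σ) ≤ h ^ (1+p*σ) := by
        rw [habs]; exact Real.rpow_le_rpow h3.le h4 (by positivity)
      have hdiv : ENNReal.ofReal (h ^ (p*σ)) / ENNReal.ofReal (h ^ (1+p*σ))
          = ENNReal.ofReal h⁻¹ := by
        rw [← ENNReal.ofReal_div_of_pos (Real.rpow_pos_of_pos hh0 _)]
        congr 1
        rw [← Real.rpow_sub hh0, show p*σ - (1+p*σ) = -1 by ring, Real.rpow_neg_one]
      calc ENNReal.ofReal h⁻¹ * φ t s
          = ENNReal.ofReal (h^(p*σ)) / ENNReal.ofReal (h^(1+p*σ)) * φ t s := by rw [hdiv]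
        _ = ENNReal.ofReal (h^(p*σ)) * (φ t s / ENNReal.ofReal (h^(1+p*σ))) := by
            rw [div_eq_mul_inv, div_eq_mul_inv]; ring
        _ ≤ ENNReal.ofReal (h^(p*σ)) *
              (φ t s / ENNReal.ofReal (|t-s|^(1+p*σ))) :=
            mul_le_mul_right (ENNReal.div_le_div_left (ENNReal.ofReal_le_ofReal hle) _) _
    · rw [show F s t = 0 from by rw [hFdef]; exact Set.indicator_of_notMem hmem _, mul_zero]
      exact zero_le
  have hK : Measurable (fun q : ℝ × ℝ =>
      φ q.2 q.1 / ENNReal.ofReal (|q.2 - q.1| ^ (1+p*σ))) :=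
    (hφ.comp (measurable_snd.prodMk measurable_fst)).div
      (ENNReal.measurable_ofReal.comp
        (((measurable_snd.sub measurable_fst).abs).pow_const _))
  calc (∫⁻ θ in Set.Icc (0 : ℝ) 1,
        ∑ j ∈ Finset.Icc 1 N,
          ∫⁻ t in Set.Ioc (((j : ℝ) - 1 + θ) * h)
              (if j = N then T else ((j : ℝ) + θ) * h),
            φ t (((j : ℝ) - 1 + θ) * h))
      ≤ ENNReal.ofReal h⁻¹ * ∫⁻ s in Set.Ioc (0:ℝ) T, g s := stepBCD
    _ = ∫⁻ s in Set.Ioc (0:ℝ) T, ∫⁻ t in Set.Ioc (0:ℝ) T, ENNReal.ofReal h⁻¹ * F s t := by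
        rw [← lintegral_const_mul' _ _ ENNReal.ofReal_ne_top]
        exact lintegral_congr fun s => (lintegral_const_mul' _ _ ENNReal.ofReal_ne_top).symm
    _ ≤ ∫⁻ s in Set.Ioc (0:ℝ) T, ∫⁻ t in Set.Ioc (0:ℝ) T,
          ENNReal.ofReal (h ^ (p*σ)) * (φ t s / ENNReal.ofReal (|t - s| ^ (1 + p*σ))) :=
        lintegral_mono fun s => lintegral_mono fun t => pointwise s t
    _ = ENNReal.ofReal (h ^ (p*σ)) * ∫⁻ s in Set.Ioc (0:ℝ) T, ∫⁻ t in Set.Ioc (0:ℝ) T,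
          φ t s / ENNReal.ofReal (|t - s| ^ (1 + p*σ)) := by
        rw [← lintegral_const_mul' _ _ ENNReal.ofReal_ne_top]
        exact lintegral_congr fun s => lintegral_const_mul' _ _ ENNReal.ofReal_ne_top
    _ = ENNReal.ofReal (h ^ (p * σ)) *
        ∫⁻ t in Set.Ioc (0 : ℝ) T, ∫⁻ s in Set.Ioc (0 : ℝ) T,
          φ t s / ENNReal.ofReal (|t - s| ^ (1 + p * σ)) := by
        congr 1
        exact lintegral_lintegral_swap hK.aemeasurable
end

section
/- Let p ∈ [2, ∞), σ ∈ (0, 1), let [a, b] ⊂ ℝ be an interval of length h = b − a > 0, set m = (a + b)/2, and let f ∈ L^p(a, b). Then ∫_a^b | ∫_a^b ∫_m^t (f(s) − f(r)) ds dr |^p dt ≤ h^{2p + pσ} ∫_a^b ∫_a^b |f(s) − f(r)|^p / |s − r|^{pσ + 1} ds dr. -/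
open MeasureTheory intervalIntegral

open scoped ENNReal

private lemma holder_one_aux {α : Type*} [MeasurableSpace α] (μ : Measure α) {p q : ℝ}
    (hpq : p.HolderConjugate q) {F : α → ℝ≥0∞} (hF : AEMeasurable F μ) :
    ∫⁻ x, F x ∂μ ≤ (∫⁻ x, F x ^ p ∂μ) ^ (1 / p) * (μ Set.univ) ^ (1 / q) := by
  have := ENNReal.lintegral_mul_le_Lp_mul_Lq μ hpq hF (aemeasurable_const (b := (1:ℝ≥0∞)))
  simpa using this

/-- Core deterministic estimate in the proof that the generalized stochastic trapezoidal
rule converges with order `1 + σ`: for `f ∈ L^p(a,b)`, `h = b - a`, `m = (a+b)/2`,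
`∫_a^b |∫_a^b ∫_m^t (f(s)-f(r)) ds dr|^p dt
  ≤ h^{2p+pσ} ∫_a^b ∫_a^b |f(s)-f(r)|^p / |s-r|^{pσ+1} ds dr`. -/
theorem trapezoidal_core_estimate (p σ : ℝ) (hp : 2 ≤ p) (hσ : σ ∈ Set.Ioo (0 : ℝ) 1)
    (a b : ℝ) (hab : a < b) (f : ℝ → ℝ)
    (hf : MemLp f (ENNReal.ofReal p) (volume.restrict (Set.Ioc a b))) :
    (∫⁻ t in Set.Ioc a b,
        ENNReal.ofReal
          (|∫ r in a..b, ∫ s in ((a + b) / 2)..t, (f s - f r)| ^ p)) ≤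
      ENNReal.ofReal ((b - a) ^ (2 * p + p * σ)) *
        ∫⁻ r in Set.Ioc a b, ∫⁻ s in Set.Ioc a b,
          ENNReal.ofReal (|f s - f r| ^ p / |s - r| ^ (p * σ + 1)) := by
  obtain ⟨hσ0, hσ1⟩ := hσ
  have hp1 : (1:ℝ) < p := by linarith
  have hp0 : (0:ℝ) < p := by linarith
  have hh : (0:ℝ) < b - a := sub_pos.2 hab
  set D := Set.Ioc a b with hD
  set m := (a + b) / 2 with hm
  have hma : a < m := by rw [hm]; linarith
  have hmb : m < b := by rw [hm]; linarith
  set q := p.conjExponent with hq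
  have hpq : p.HolderConjugate q := Real.HolderConjugate.conjExponent hp1
  have hq2 : 2 * p / q = 2 * p - 2 := by
    rw [hq, Real.conjExponent]
    field_simp
  -- a measurable representative of f
  set g := hf.1.mk f with hgdef
  have hfg : f =ᵐ[volume.restrict D] g := hf.1.ae_eq_mk
  have hgmeas : Measurable g := hf.1.stronglyMeasurable_mk.measurable
  set e := p * σ + 1 with he
  have he0 : (0:ℝ) < e := by positivity
  -- main double lintegrals
  set Eg : ℝ≥0∞ := ∫⁻ r in D, ∫⁻ s in D, (‖g s - g r‖₊ : ℝ≥0∞) with hEg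
  set Lg : ℝ≥0∞ := ∫⁻ r in D, ∫⁻ s in D, (‖g s - g r‖₊ : ℝ≥0∞) ^ p with hLg
  set Sf : ℝ≥0∞ := ∫⁻ r in D, ∫⁻ s in D, ENNReal.ofReal (|f s - f r| ^ p / |s - r| ^ e)
    with hSf
  set Sg : ℝ≥0∞ := ∫⁻ r in D, ∫⁻ s in D, ENNReal.ofReal (|g s - g r| ^ p / |s - r| ^ e)
    with hSg
  have hSfg : Sf = Sg := by
    rw [hSf, hSg]
    calc ∫⁻ r in D, ∫⁻ s in D, ENNReal.ofReal (|f s - f r| ^ p / |s - r| ^ e)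
        = ∫⁻ r in D, ∫⁻ s in D, ENNReal.ofReal (|g s - f r| ^ p / |s - r| ^ e) := by
          refine lintegral_congr fun r => lintegral_congr_ae ?_
          filter_upwards [hfg] with s hs
          rw [hs]
      _ = ∫⁻ r in D, ∫⁻ s in D, ENNReal.ofReal (|g s - g r| ^ p / |s - r| ^ e) := by
          refine lintegral_congr_ae ?_
          filter_upwards [hfg] with r hr
          simp only [hr]
  -- Step A : pointwise bound on the interval integral
  have stepA : ∀ t ∈ D,
      (‖∫ r in a..b, ∫ s in m..t, (f s - f r)‖₊ : ℝ≥0∞) ≤ Eg := by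
    intro t ht
    have h1 : (‖∫ r in a..b, ∫ s in m..t, (f s - f r)‖₊ : ℝ≥0∞)
        ≤ ∫⁻ r in D, ∫⁻ s in D, (‖f s - f r‖₊ : ℝ≥0∞) := by
      rw [intervalIntegral.integral_of_le hab.le]
      refine le_trans (enorm_integral_le_lintegral_enorm _) (lintegral_mono fun r => ?_)
      rcases le_total m t with h1 | h1
      · rw [intervalIntegral.integral_of_le h1]
        refine le_trans (enorm_integral_le_lintegral_enorm _) (lintegral_mono_set ?_)
        exact Set.Ioc_subset_Ioc hma.le ht.2
      · rw [intervalIntegral.integral_symm, enorm_neg]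
        rw [intervalIntegral.integral_of_le h1]
        refine le_trans (enorm_integral_le_lintegral_enorm _) (lintegral_mono_set ?_)
        exact Set.Ioc_subset_Ioc (le_of_lt ht.1) hmb.le
    refine h1.trans (le_of_eq ?_)
    rw [hEg]
    calc ∫⁻ r in D, ∫⁻ s in D, (‖f s - f r‖₊ : ℝ≥0∞)
        = ∫⁻ r in D, ∫⁻ s in D, (‖g s - f r‖₊ : ℝ≥0∞) := by
          refine lintegral_congr fun r => lintegral_congr_ae ?_
          filter_upwards [hfg] with s hs
          rw [hs]
      _ = ∫⁻ r in D, ∫⁻ s in D, (‖g s - g r‖₊ : ℝ≥0∞) := by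
          refine lintegral_congr_ae ?_
          filter_upwards [hfg] with r hr
          simp only [hr]
  -- measure of D
  have hvol : (volume.restrict D) Set.univ = ENNReal.ofReal (b - a) := by
    rw [Measure.restrict_apply_univ, hD, Real.volume_Ioc]
  set c : ℝ≥0∞ := (ENNReal.ofReal (b - a)) ^ (1 / q) with hc
  -- Step B : Hölder twice
  have hGmeas : Measurable (Function.uncurry fun r s => ((‖g s - g r‖₊ : ℝ≥0∞)) ^ p) := by
    apply Measurable.pow_const
    exact ((hgmeas.comp measurable_snd).sub (hgmeas.comp measurable_fst)).nnnorm.coe_nnreal_ennreal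
  have hΦmeas : Measurable fun r => ∫⁻ s in D, ((‖g s - g r‖₊ : ℝ≥0∞)) ^ p :=
    hGmeas.lintegral_prod_right
  have stepB : Eg ≤ Lg ^ (1 / p) * c ^ 2 := by
    have inner : ∀ r, ∫⁻ s in D, (‖g s - g r‖₊ : ℝ≥0∞)
        ≤ (∫⁻ s in D, ((‖g s - g r‖₊ : ℝ≥0∞)) ^ p) ^ (1 / p) * c := by
      intro r
      have := holder_one_aux (volume.restrict D) hpq
        (F := fun s => (‖g s - g r‖₊ : ℝ≥0∞))
        (((hgmeas.sub measurable_const).nnnorm.coe_nnreal_ennreal).aemeasurable)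
      rwa [hvol] at this
    calc Eg ≤ ∫⁻ r in D, (∫⁻ s in D, ((‖g s - g r‖₊ : ℝ≥0∞)) ^ p) ^ (1 / p) * c := by
          rw [hEg]; exact lintegral_mono inner
      _ = (∫⁻ r in D, (∫⁻ s in D, ((‖g s - g r‖₊ : ℝ≥0∞)) ^ p) ^ (1 / p)) * c :=
          lintegral_mul_const' c _ (by rw [hc]; exact ENNReal.rpow_ne_top_of_nonneg hpq.symm.one_div_nonneg ENNReal.ofReal_ne_top)
      _ ≤ ((∫⁻ r in D, ((∫⁻ s in D, ((‖g s - g r‖₊ : ℝ≥0∞)) ^ p) ^ (1 / p)) ^ p) ^ (1/p) * c) * c := by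
          refine mul_le_mul_left ?_ c
          have := holder_one_aux (volume.restrict D) hpq
            (F := fun r => (∫⁻ s in D, ((‖g s - g r‖₊ : ℝ≥0∞)) ^ p) ^ (1 / p))
            ((hΦmeas.pow_const _).aemeasurable)
          rwa [hvol] at this
      _ = Lg ^ (1 / p) * c ^ 2 := by
          rw [hLg, sq, mul_assoc]
          congr 2
          refine lintegral_congr fun r => ?_
          rw [← ENNReal.rpow_mul, one_div, inv_mul_cancel₀ hp0.ne', ENNReal.rpow_one]
  -- Step C : pointwise lower order bound
  have key : ∀ r ∈ D, ∀ s ∈ D, (‖g s - g r‖₊ : ℝ≥0∞) ^ p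
      ≤ ENNReal.ofReal ((b - a) ^ e) * ENNReal.ofReal (|g s - g r| ^ p / |s - r| ^ e) := by
    intro r hr s hs
    have h1 : (‖g s - g r‖₊ : ℝ≥0∞) ^ p = ENNReal.ofReal (|g s - g r| ^ p) := by
      rw [← enorm_eq_nnnorm, Real.enorm_eq_ofReal_abs, ENNReal.ofReal_rpow_of_nonneg (abs_nonneg _) hp0.le]
    rw [h1, ← ENNReal.ofReal_mul (by positivity)]
    refine ENNReal.ofReal_le_ofReal ?_
    by_cases hsr : s = r
    · subst hsr
      have : |g s - g s| ^ p = 0 := by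
        simp [sub_self, abs_zero, Real.zero_rpow hp0.ne']
      rw [this]
      positivity
    · have h2 : (0:ℝ) < |s - r| := abs_pos.2 (sub_ne_zero.2 hsr)
      have h3 : |s - r| ≤ b - a := by
        rw [abs_sub_le_iff]
        constructor <;> [linarith [hr.1, hs.2]; linarith [hs.1, hr.2]]
      have h4 : |s - r| ^ e ≤ (b - a) ^ e := Real.rpow_le_rpow (abs_nonneg _) h3 he0.le
      have h5 : (0:ℝ) < |s - r| ^ e := Real.rpow_pos_of_pos h2 e
      calc |g s - g r| ^ p = |s - r| ^ e * (|g s - g r| ^ p / |s - r| ^ e) := by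
            field_simp
        _ ≤ (b - a) ^ e * (|g s - g r| ^ p / |s - r| ^ e) :=
            mul_le_mul_of_nonneg_right h4 (by positivity)
  have stepC : Lg ≤ ENNReal.ofReal ((b - a) ^ e) * Sg := by
    calc Lg ≤ ∫⁻ r in D, ∫⁻ s in D,
          ENNReal.ofReal ((b - a) ^ e) * ENNReal.ofReal (|g s - g r| ^ p / |s - r| ^ e) := by
          rw [hLg]
          refine lintegral_mono_ae ?_
          filter_upwards [ae_restrict_mem measurableSet_Ioc] with r hr
          refine lintegral_mono_ae ?_
          filter_upwards [ae_restrict_mem measurableSet_Ioc] with s hs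
          exact key r hr s hs
      _ = ENNReal.ofReal ((b - a) ^ e) * Sg := by
          rw [hSg]
          simp_rw [lintegral_const_mul' _ _ ENNReal.ofReal_ne_top]
  -- assembling everything
  have hLHS : (∫⁻ t in D,
        ENNReal.ofReal (|∫ r in a..b, ∫ s in m..t, (f s - f r)| ^ p))
      ≤ ENNReal.ofReal (b - a) * Eg ^ p := by
    calc (∫⁻ t in D, ENNReal.ofReal (|∫ r in a..b, ∫ s in m..t, (f s - f r)| ^ p))
        ≤ ∫⁻ _t in D, Eg ^ p := by
          refine lintegral_mono_ae ?_
          filter_upwards [ae_restrict_mem measurableSet_Ioc] with t ht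
          have h1 : ENNReal.ofReal (|∫ r in a..b, ∫ s in m..t, (f s - f r)| ^ p)
              = ((‖∫ r in a..b, ∫ s in m..t, (f s - f r)‖₊ : ℝ≥0∞)) ^ p := by
            rw [← enorm_eq_nnnorm, Real.enorm_eq_ofReal_abs,
              ENNReal.ofReal_rpow_of_nonneg (abs_nonneg _) hp0.le]
          rw [h1]
          exact ENNReal.rpow_le_rpow (stepA t ht) hp0.le
      _ = ENNReal.ofReal (b - a) * Eg ^ p := by
          rw [setLIntegral_const, hD, Real.volume_Ioc, mul_comm]
  have hc2 : (c ^ 2) ^ p = ENNReal.ofReal ((b - a) ^ (2 * p / q)) := by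
    rw [hc, ← ENNReal.rpow_natCast _ 2, ← ENNReal.rpow_mul, ← ENNReal.rpow_mul,
      ENNReal.ofReal_rpow_of_pos hh]
    norm_num
    ring_nf
  calc (∫⁻ t in D, ENNReal.ofReal (|∫ r in a..b, ∫ s in m..t, (f s - f r)| ^ p))
      ≤ ENNReal.ofReal (b - a) * Eg ^ p := hLHS
    _ ≤ ENNReal.ofReal (b - a) * (Lg ^ (1 / p) * c ^ 2) ^ p :=
        mul_le_mul_right (ENNReal.rpow_le_rpow stepB hp0.le) _
    _ = ENNReal.ofReal (b - a) * (Lg * (c ^ 2) ^ p) := by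
        rw [ENNReal.mul_rpow_of_nonneg _ _ hp0.le, ← ENNReal.rpow_mul, one_div,
          inv_mul_cancel₀ hp0.ne', ENNReal.rpow_one]
    _ ≤ ENNReal.ofReal (b - a) * ((ENNReal.ofReal ((b - a) ^ e) * Sg) * (c ^ 2) ^ p) := by
        gcongr
    _ = ENNReal.ofReal ((b - a) ^ (2 * p + p * σ)) * Sg := by
        rw [hc2]
        have : ENNReal.ofReal (b - a) * ENNReal.ofReal ((b - a) ^ e)
            * ENNReal.ofReal ((b - a) ^ (2 * p / q))
            = ENNReal.ofReal ((b - a) ^ (2 * p + p * σ)) := by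
          rw [← ENNReal.ofReal_mul hh.le, ← ENNReal.ofReal_mul (by positivity)]
          congr 1
          nth_rewrite 1 [← Real.rpow_one (b - a)]
          rw [← Real.rpow_add hh, ← Real.rpow_add hh, he, hq2]
          congr 1
          ring
        rw [← this]
        ring
    _ = ENNReal.ofReal ((b - a) ^ (2 * p + p * σ)) * Sf := by rw [hSfg]
end

section
/- Let T ∈ (0, ∞), σ ∈ (0, 1) and p ∈ [1, ∞) with σp < 1, let n ∈ ℕ and c_1, …, c_n ∈ [0, T], and define f : [0, T] → ℝ by f(t) = Σ_{k=1}^n I_{c_k}(t), where I_c(t) = 1 if t ≥ c and I_c(t) = 0 if t < c. Then ∫₀^T ∫₀^T |f(t) − f(s)|^p / |t − s|^{1 + σp} dt ds ≤ n^p · (2 / (σp(1 − σp))) T^{1 − σp}. -/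
open MeasureTheory Finset Set

/-- The indicator function `I_c(t) = 1` for `t ≥ c` and `0` for `t < c`. -/
noncomputable def jumpInd (c t : ℝ) : ℝ := if c ≤ t then 1 else 0

/-- The Sobolev–Slobodeckij double integral on `(0,T)`. -/
noncomputable def slobodeckijSeminorm (T σ p : ℝ) (v : ℝ → ℝ) : ENNReal :=
  ∫⁻ s in Set.Ioc (0 : ℝ) T, ∫⁻ t in Set.Ioc (0 : ℝ) T,
    ENNReal.ofReal (|v t - v s| ^ p / |t - s| ^ (1 + σ * p))

lemma inner_bound {a : ℝ} (ha0 : 0 < a) {s c T : ℝ} (hs : s < c) (hcT : c ≤ T) :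
    ∫⁻ t in Set.Ioc (0 : ℝ) T,
        ENNReal.ofReal ((if c ≤ t then (1 : ℝ) else 0) / |t - s| ^ (1 + a)) ≤
      ENNReal.ofReal ((c - s) ^ (-a) / a) := by
  have key : ∀ t ∈ Set.Ioc (0 : ℝ) T,
      ENNReal.ofReal ((if c ≤ t then (1 : ℝ) else 0) / |t - s| ^ (1 + a)) ≤
      (Set.Icc c T).indicator (fun t => ENNReal.ofReal ((t - s) ^ (-(1 + a)))) t := by
    intro t ht
    by_cases hct : c ≤ t
    · rw [Set.indicator_of_mem (Set.mem_Icc.2 ⟨hct, ht.2⟩), if_pos hct]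
      have hts : 0 < t - s := by linarith
      rw [abs_of_pos hts, Real.rpow_neg hts.le, one_div]
    · rw [if_neg hct]
      simp
  have hmeas : Measurable ((Set.Icc c T).indicator
      (fun t : ℝ => ENNReal.ofReal ((t - s) ^ (-(1 + a))))) :=
    (ENNReal.measurable_ofReal.comp
      ((measurable_id.sub measurable_const).pow_const _)).indicator measurableSet_Icc
  have hcont : ContinuousOn (fun t : ℝ => (t - s) ^ (-(1 + a))) (Set.Icc c T) :=
    ((continuous_id.sub continuous_const).continuousOn).rpow_const
      (fun x hx => Or.inl (by intro h; simp only [Pi.sub_apply, id_eq] at h; linarith [hx.1]))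
  have hint : IntegrableOn (fun t : ℝ => (t - s) ^ (-(1 + a))) (Set.Icc c T) :=
    hcont.integrableOn_Icc
  calc ∫⁻ t in Set.Ioc (0 : ℝ) T,
        ENNReal.ofReal ((if c ≤ t then (1 : ℝ) else 0) / |t - s| ^ (1 + a))
      ≤ ∫⁻ t in Set.Ioc (0 : ℝ) T, (Set.Icc c T).indicator
          (fun t => ENNReal.ofReal ((t - s) ^ (-(1 + a)))) t :=
        setLIntegral_mono hmeas key
    _ ≤ ∫⁻ t, (Set.Icc c T).indicator
          (fun t => ENNReal.ofReal ((t - s) ^ (-(1 + a)))) t :=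
        setLIntegral_le_lintegral _ _
    _ = ∫⁻ t in Set.Icc c T, ENNReal.ofReal ((t - s) ^ (-(1 + a))) :=
        lintegral_indicator measurableSet_Icc _
    _ = ENNReal.ofReal (∫ t in Set.Icc c T, (t - s) ^ (-(1 + a))) := by
        rw [ofReal_integral_eq_lintegral_ofReal hint ?_]
        exact (ae_restrict_iff' measurableSet_Icc).2 (Filter.Eventually.of_forall
          fun x hx => Real.rpow_nonneg (by linarith [hx.1]) _)
    _ ≤ ENNReal.ofReal ((c - s) ^ (-a) / a) := by
        apply ENNReal.ofReal_le_ofReal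
        have hval : ∫ t in Set.Icc c T, (t - s) ^ (-(1 + a)) =
            ((c - s) ^ (-a) - (T - s) ^ (-a)) / a := by
          rw [MeasureTheory.integral_Icc_eq_integral_Ioc,
            ← intervalIntegral.integral_of_le hcT,
            intervalIntegral.integral_comp_sub_right (fun u => u ^ (-(1 + a))) s,
            integral_rpow (Or.inr ⟨by intro h; nlinarith,
              Set.notMem_uIcc_of_lt (by linarith) (by linarith)⟩)]
          have h1 : -(1 + a) + 1 = -a := by ring
          rw [h1, div_neg, ← neg_div, neg_sub]
        rw [hval]
        have hTs : (0:ℝ) ≤ (T - s) ^ (-a) := Real.rpow_nonneg (by linarith) _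
        have h2 : ((c - s) ^ (-a) - (T - s) ^ (-a)) ≤ (c - s) ^ (-a) := by linarith
        gcongr

lemma inner_bound2 {a : ℝ} (ha0 : 0 < a) {s c T : ℝ} (hc0 : 0 ≤ c) (hs : c < s) :
    ∫⁻ t in Set.Ioc (0 : ℝ) T,
        ENNReal.ofReal ((if c ≤ t then (0 : ℝ) else 1) / |t - s| ^ (1 + a)) ≤
      ENNReal.ofReal ((s - c) ^ (-a) / a) := by
  have key : ∀ t ∈ Set.Ioc (0 : ℝ) T,
      ENNReal.ofReal ((if c ≤ t then (0 : ℝ) else 1) / |t - s| ^ (1 + a)) ≤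
      (Set.Icc 0 c).indicator (fun t => ENNReal.ofReal ((s - t) ^ (-(1 + a)))) t := by
    intro t ht
    by_cases hct : c ≤ t
    · rw [if_pos hct]; simp
    · push_neg at hct
      rw [Set.indicator_of_mem (Set.mem_Icc.2 ⟨ht.1.le, hct.le⟩), if_neg (not_le.2 hct)]
      have hts : 0 < s - t := by linarith
      rw [abs_of_neg (by linarith : t - s < 0), neg_sub, Real.rpow_neg hts.le, one_div]
  have hmeas : Measurable ((Set.Icc (0:ℝ) c).indicator
      (fun t : ℝ => ENNReal.ofReal ((s - t) ^ (-(1 + a))))) :=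
    (ENNReal.measurable_ofReal.comp
      ((measurable_const.sub measurable_id).pow_const _)).indicator measurableSet_Icc
  have hcont : ContinuousOn (fun t : ℝ => (s - t) ^ (-(1 + a))) (Set.Icc 0 c) :=
    ((continuous_const.sub continuous_id).continuousOn).rpow_const
      (fun x hx => Or.inl (by intro h; simp only [Pi.sub_apply, id_eq] at h; linarith [hx.2]))
  have hint : IntegrableOn (fun t : ℝ => (s - t) ^ (-(1 + a))) (Set.Icc 0 c) :=
    hcont.integrableOn_Icc
  calc ∫⁻ t in Set.Ioc (0 : ℝ) T,
        ENNReal.ofReal ((if c ≤ t then (0 : ℝ) else 1) / |t - s| ^ (1 + a))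
      ≤ ∫⁻ t in Set.Ioc (0 : ℝ) T, (Set.Icc 0 c).indicator
          (fun t => ENNReal.ofReal ((s - t) ^ (-(1 + a)))) t :=
        setLIntegral_mono hmeas key
    _ ≤ ∫⁻ t, (Set.Icc 0 c).indicator
          (fun t => ENNReal.ofReal ((s - t) ^ (-(1 + a)))) t :=
        setLIntegral_le_lintegral _ _
    _ = ∫⁻ t in Set.Icc 0 c, ENNReal.ofReal ((s - t) ^ (-(1 + a))) :=
        lintegral_indicator measurableSet_Icc _
    _ = ENNReal.ofReal (∫ t in Set.Icc 0 c, (s - t) ^ (-(1 + a))) := by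
        rw [ofReal_integral_eq_lintegral_ofReal hint ?_]
        exact (ae_restrict_iff' measurableSet_Icc).2 (Filter.Eventually.of_forall
          fun x hx => Real.rpow_nonneg (by linarith [hx.2]) _)
    _ ≤ ENNReal.ofReal ((s - c) ^ (-a) / a) := by
        apply ENNReal.ofReal_le_ofReal
        have hval : ∫ t in Set.Icc 0 c, (s - t) ^ (-(1 + a)) =
            ((s - c) ^ (-a) - (s - 0) ^ (-a)) / a := by
          rw [MeasureTheory.integral_Icc_eq_integral_Ioc,
            ← intervalIntegral.integral_of_le hc0,
            intervalIntegral.integral_comp_sub_left (fun u => u ^ (-(1 + a))) s,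
            integral_rpow (Or.inr ⟨by intro h; nlinarith,
              Set.notMem_uIcc_of_lt (by linarith) (by linarith)⟩)]
          have h1 : -(1 + a) + 1 = -a := by ring
          rw [h1, div_neg, ← neg_div, neg_sub]
        rw [hval]
        have hTs : (0:ℝ) ≤ (s - 0) ^ (-a) := Real.rpow_nonneg (by linarith) _
        have h2 : ((s - c) ^ (-a) - (s - 0) ^ (-a)) ≤ (s - c) ^ (-a) := by linarith
        gcongr

lemma outer_bound1 {a : ℝ} (ha0 : 0 < a) (ha1 : a < 1) {c T : ℝ} (hc0 : 0 ≤ c) (hcT : c ≤ T) :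
    ∫⁻ s in Set.Ioc (0 : ℝ) T,
        (if s < c then ENNReal.ofReal ((c - s) ^ (-a) / a) else 0) ≤
      ENNReal.ofReal (T ^ (1 - a) / (a * (1 - a))) := by
  have key : ∀ s ∈ Set.Ioc (0 : ℝ) T,
      (if s < c then ENNReal.ofReal ((c - s) ^ (-a) / a) else 0) ≤
      (Set.Icc 0 c).indicator (fun s => ENNReal.ofReal ((c - s) ^ (-a) / a)) s := by
    intro s hsm
    by_cases hsc : s < c
    · rw [if_pos hsc, Set.indicator_of_mem (Set.mem_Icc.2 ⟨hsm.1.le, hsc.le⟩)]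
    · rw [if_neg hsc]; exact zero_le
  have hmeas : Measurable ((Set.Icc (0:ℝ) c).indicator
      (fun s : ℝ => ENNReal.ofReal ((c - s) ^ (-a) / a))) :=
    (ENNReal.measurable_ofReal.comp
      (((measurable_const.sub measurable_id).pow_const _).div_const a)).indicator
      measurableSet_Icc
  have hii : IntervalIntegrable (fun s : ℝ => (c - s) ^ (-a) / a) volume 0 c := by
    have h := ((intervalIntegral.intervalIntegrable_rpow'
      (by linarith : (-1:ℝ) < -a)).comp_sub_left (a := c) (b := 0) c).div_const a
    simpa using h
  have hint : IntegrableOn (fun s : ℝ => (c - s) ^ (-a) / a) (Set.Icc 0 c) := by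
    rw [integrableOn_Icc_iff_integrableOn_Ioc]
    exact (hii.1 : _)
  calc ∫⁻ s in Set.Ioc (0 : ℝ) T,
        (if s < c then ENNReal.ofReal ((c - s) ^ (-a) / a) else 0)
      ≤ ∫⁻ s in Set.Ioc (0 : ℝ) T, (Set.Icc 0 c).indicator
          (fun s => ENNReal.ofReal ((c - s) ^ (-a) / a)) s :=
        setLIntegral_mono hmeas key
    _ ≤ ∫⁻ s, (Set.Icc 0 c).indicator
          (fun s => ENNReal.ofReal ((c - s) ^ (-a) / a)) s :=
        setLIntegral_le_lintegral _ _
    _ = ∫⁻ s in Set.Icc 0 c, ENNReal.ofReal ((c - s) ^ (-a) / a) :=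
        lintegral_indicator measurableSet_Icc _
    _ = ENNReal.ofReal (∫ s in Set.Icc 0 c, (c - s) ^ (-a) / a) := by
        rw [ofReal_integral_eq_lintegral_ofReal hint ?_]
        exact (ae_restrict_iff' measurableSet_Icc).2 (Filter.Eventually.of_forall
          fun x hx => div_nonneg (Real.rpow_nonneg (by linarith [hx.2]) _) ha0.le)
    _ ≤ ENNReal.ofReal (T ^ (1 - a) / (a * (1 - a))) := by
        apply ENNReal.ofReal_le_ofReal
        have hval : ∫ s in Set.Icc 0 c, (c - s) ^ (-a) / a =
            (c ^ (1 - a) / (1 - a)) / a := by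
          rw [MeasureTheory.integral_Icc_eq_integral_Ioc,
            ← intervalIntegral.integral_of_le hc0, intervalIntegral.integral_div,
            intervalIntegral.integral_comp_sub_left (fun u => u ^ (-a)) c]
          norm_num
          rw [integral_rpow (Or.inl (by linarith))]
          have h1 : -a + 1 = 1 - a := by ring
          rw [h1, Real.zero_rpow (by linarith : (1:ℝ) - a ≠ 0)]
          ring
        rw [hval, div_div, mul_comm (1 - a) a]
        exact div_le_div₀ (Real.rpow_nonneg (by linarith) _)
          (Real.rpow_le_rpow hc0 hcT (by linarith)) (by nlinarith) le_rfl

lemma outer_bound2 {a : ℝ} (ha0 : 0 < a) (ha1 : a < 1) {c T : ℝ} (hc0 : 0 ≤ c) (hcT : c ≤ T)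
    (hT : 0 ≤ T) :
    ∫⁻ s in Set.Ioc (0 : ℝ) T,
        (if c < s then ENNReal.ofReal ((s - c) ^ (-a) / a) else 0) ≤
      ENNReal.ofReal (T ^ (1 - a) / (a * (1 - a))) := by
  have key : ∀ s ∈ Set.Ioc (0 : ℝ) T,
      (if c < s then ENNReal.ofReal ((s - c) ^ (-a) / a) else 0) ≤
      (Set.Icc c T).indicator (fun s => ENNReal.ofReal ((s - c) ^ (-a) / a)) s := by
    intro s hsm
    by_cases hsc : c < s
    · rw [if_pos hsc, Set.indicator_of_mem (Set.mem_Icc.2 ⟨hsc.le, hsm.2⟩)]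
    · rw [if_neg hsc]; exact zero_le
  have hmeas : Measurable ((Set.Icc c T).indicator
      (fun s : ℝ => ENNReal.ofReal ((s - c) ^ (-a) / a))) :=
    (ENNReal.measurable_ofReal.comp
      (((measurable_id.sub measurable_const).pow_const _).div_const a)).indicator
      measurableSet_Icc
  have hii : IntervalIntegrable (fun s : ℝ => (s - c) ^ (-a) / a) volume c T := by
    have h := ((intervalIntegral.intervalIntegrable_rpow'
      (by linarith : (-1:ℝ) < -a)).comp_sub_right (a := 0) (b := T - c) c).div_const a
    simpa using h
  have hint : IntegrableOn (fun s : ℝ => (s - c) ^ (-a) / a) (Set.Icc c T) := by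
    rw [integrableOn_Icc_iff_integrableOn_Ioc]
    exact (hii.1 : _)
  calc ∫⁻ s in Set.Ioc (0 : ℝ) T,
        (if c < s then ENNReal.ofReal ((s - c) ^ (-a) / a) else 0)
      ≤ ∫⁻ s in Set.Ioc (0 : ℝ) T, (Set.Icc c T).indicator
          (fun s => ENNReal.ofReal ((s - c) ^ (-a) / a)) s :=
        setLIntegral_mono hmeas key
    _ ≤ ∫⁻ s, (Set.Icc c T).indicator
          (fun s => ENNReal.ofReal ((s - c) ^ (-a) / a)) s :=
        setLIntegral_le_lintegral _ _
    _ = ∫⁻ s in Set.Icc c T, ENNReal.ofReal ((s - c) ^ (-a) / a) :=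
        lintegral_indicator measurableSet_Icc _
    _ = ENNReal.ofReal (∫ s in Set.Icc c T, (s - c) ^ (-a) / a) := by
        rw [ofReal_integral_eq_lintegral_ofReal hint ?_]
        exact (ae_restrict_iff' measurableSet_Icc).2 (Filter.Eventually.of_forall
          fun x hx => div_nonneg (Real.rpow_nonneg (by linarith [hx.1]) _) ha0.le)
    _ ≤ ENNReal.ofReal (T ^ (1 - a) / (a * (1 - a))) := by
        apply ENNReal.ofReal_le_ofReal
        have hval : ∫ s in Set.Icc c T, (s - c) ^ (-a) / a =
            ((T - c) ^ (1 - a) / (1 - a)) / a := by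
          rw [MeasureTheory.integral_Icc_eq_integral_Ioc,
            ← intervalIntegral.integral_of_le hcT, intervalIntegral.integral_div,
            intervalIntegral.integral_comp_sub_right (fun u => u ^ (-a)) c]
          norm_num
          rw [integral_rpow (Or.inl (by linarith))]
          have h1 : -a + 1 = 1 - a := by ring
          rw [h1, Real.zero_rpow (by linarith : (1:ℝ) - a ≠ 0)]
          ring
        rw [hval, div_div, mul_comm (1 - a) a]
        exact div_le_div₀ (Real.rpow_nonneg hT _)
          (Real.rpow_le_rpow (by linarith) (by linarith) (by linarith)) (by nlinarith) le_rfl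

noncomputable def jumpBound (a c s : ℝ) : ENNReal :=
  (if s < c then ENNReal.ofReal ((c - s) ^ (-a) / a) else 0) +
  (if c < s then ENNReal.ofReal ((s - c) ^ (-a) / a) else 0)

lemma measurable_jumpBound (a c : ℝ) : Measurable (jumpBound a c) := by
  apply Measurable.add
  · exact Measurable.ite measurableSet_Iio
      (ENNReal.measurable_ofReal.comp
        (((measurable_const.sub measurable_id).pow_const _).div_const a)) measurable_const
  · exact Measurable.ite measurableSet_Ioi
      (ENNReal.measurable_ofReal.comp
        (((measurable_id.sub measurable_const).pow_const _).div_const a)) measurable_const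

lemma jump_abs_le_one (c t s : ℝ) : |jumpInd c t - jumpInd c s| ≤ 1 := by
  unfold jumpInd; split_ifs <;> norm_num

lemma measurable_term (c s a : ℝ) :
    Measurable fun t : ℝ =>
      ENNReal.ofReal (|jumpInd c t - jumpInd c s| / |t - s| ^ (1 + a)) := by
  have h1 : Measurable (jumpInd c) :=
    Measurable.ite (measurableSet_Ici) measurable_const measurable_const
  exact ENNReal.measurable_ofReal.comp
    (((h1.sub measurable_const).abs).div
      (((measurable_id.sub measurable_const).abs).pow_const _))

lemma pointwise_bound (n : ℕ) (c : Fin n → ℝ) {p : ℝ} (hp : 1 ≤ p) {D : ℝ} (hD : 0 ≤ D)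
    (t s : ℝ) :
    |(∑ k, jumpInd (c k) t) - ∑ k, jumpInd (c k) s| ^ p / D ≤
      (n : ℝ) ^ (p - 1) * ∑ k, |jumpInd (c k) t - jumpInd (c k) s| / D := by
  set N := ∑ k, |jumpInd (c k) t - jumpInd (c k) s| with hN
  have hN0 : 0 ≤ N := Finset.sum_nonneg fun k _ => abs_nonneg _
  have habs : |(∑ k, jumpInd (c k) t) - ∑ k, jumpInd (c k) s| ≤ N := by
    rw [hN, ← Finset.sum_sub_distrib]
    exact Finset.abs_sum_le_sum_abs _ _
  have hNn : N ≤ (n : ℝ) := by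
    calc N ≤ ∑ _k : Fin n, (1 : ℝ) :=
          Finset.sum_le_sum fun k _ => jump_abs_le_one _ _ _
      _ = n := by simp
  have h1 : |(∑ k, jumpInd (c k) t) - ∑ k, jumpInd (c k) s| ^ p ≤ N ^ p :=
    Real.rpow_le_rpow (abs_nonneg _) habs (by linarith)
  have hpow : |(∑ k, jumpInd (c k) t) - ∑ k, jumpInd (c k) s| ^ p ≤ (n : ℝ) ^ (p - 1) * N := by
    rcases eq_or_lt_of_le hN0 with h0 | h0
    · refine h1.trans ?_
      rw [← h0, Real.zero_rpow (by linarith : p ≠ 0)]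
      nlinarith [Real.rpow_nonneg (Nat.cast_nonneg n : (0:ℝ) ≤ n) (p - 1)]
    · refine h1.trans ?_
      have h2 : N ^ p = N ^ (p - 1) * N := by
        nth_rewrite 3 [← Real.rpow_one N]
        rw [← Real.rpow_add h0]
        norm_num
      rw [h2]
      have h3 : N ^ (p - 1) ≤ (n : ℝ) ^ (p - 1) :=
        Real.rpow_le_rpow hN0 hNn (by linarith)
      exact mul_le_mul_of_nonneg_right h3 hN0
  rw [div_eq_mul_inv, ← Finset.sum_div, div_eq_mul_inv, ← mul_assoc]
  exact mul_le_mul_of_nonneg_right hpow (inv_nonneg.2 hD)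

lemma pointwise_ennreal (n : ℕ) (c : Fin n → ℝ) {p a : ℝ} (hp : 1 ≤ p) (t s : ℝ) :
    ENNReal.ofReal (|(∑ k, jumpInd (c k) t) - ∑ k, jumpInd (c k) s| ^ p / |t - s| ^ (1 + a)) ≤
      ENNReal.ofReal ((n : ℝ) ^ (p - 1)) *
        ∑ k, ENNReal.ofReal (|jumpInd (c k) t - jumpInd (c k) s| / |t - s| ^ (1 + a)) := by
  have hD : (0:ℝ) ≤ |t - s| ^ (1 + a) := Real.rpow_nonneg (abs_nonneg _) _
  calc ENNReal.ofReal (|(∑ k, jumpInd (c k) t) - ∑ k, jumpInd (c k) s| ^ p / |t - s| ^ (1 + a))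
      ≤ ENNReal.ofReal ((n : ℝ) ^ (p - 1) *
          ∑ k, |jumpInd (c k) t - jumpInd (c k) s| / |t - s| ^ (1 + a)) :=
        ENNReal.ofReal_le_ofReal (pointwise_bound n c hp hD t s)
    _ = ENNReal.ofReal ((n : ℝ) ^ (p - 1)) *
          ENNReal.ofReal (∑ k, |jumpInd (c k) t - jumpInd (c k) s| / |t - s| ^ (1 + a)) :=
        ENNReal.ofReal_mul (Real.rpow_nonneg (Nat.cast_nonneg n) _)
    _ = ENNReal.ofReal ((n : ℝ) ^ (p - 1)) *
          ∑ k, ENNReal.ofReal (|jumpInd (c k) t - jumpInd (c k) s| / |t - s| ^ (1 + a)) := by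
        rw [ENNReal.ofReal_sum_of_nonneg fun k _ => div_nonneg (abs_nonneg _) hD]

lemma inner_total {a : ℝ} (ha0 : 0 < a) {c T s : ℝ} (hc0 : 0 ≤ c) (hcT : c ≤ T)
    (hsc : s ≠ c) :
    ∫⁻ t in Set.Ioc (0 : ℝ) T,
        ENNReal.ofReal (|jumpInd c t - jumpInd c s| / |t - s| ^ (1 + a)) ≤
      jumpBound a c s := by
  rcases lt_or_gt_of_ne hsc with h | h
  · have heq : ∀ t : ℝ, |jumpInd c t - jumpInd c s| = if c ≤ t then (1:ℝ) else 0 := by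
      intro t
      rw [jumpInd, jumpInd, if_neg (not_le.2 h)]
      split_ifs <;> norm_num
    simp_rw [heq]
    refine (inner_bound ha0 h hcT).trans ?_
    rw [jumpBound, if_pos h, if_neg (by linarith)]
    simp
  · have heq : ∀ t : ℝ, |jumpInd c t - jumpInd c s| = if c ≤ t then (0:ℝ) else 1 := by
      intro t
      rw [jumpInd, jumpInd, if_pos (le_of_lt h)]
      split_ifs <;> norm_num
    simp_rw [heq]
    refine (inner_bound2 ha0 hc0 h).trans ?_
    rw [jumpBound, if_neg (by linarith), if_pos h]
    simp

lemma lintegral_jumpBound {a : ℝ} (ha0 : 0 < a) (ha1 : a < 1) {c T : ℝ} (hc0 : 0 ≤ c)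
    (hcT : c ≤ T) (hT : 0 ≤ T) :
    ∫⁻ s in Set.Ioc (0 : ℝ) T, jumpBound a c s ≤
      2 * ENNReal.ofReal (T ^ (1 - a) / (a * (1 - a))) := by
  have hmeas : Measurable fun s : ℝ =>
      (if s < c then ENNReal.ofReal ((c - s) ^ (-a) / a) else 0) :=
    Measurable.ite measurableSet_Iio
      (ENNReal.measurable_ofReal.comp
        (((measurable_const.sub measurable_id).pow_const _).div_const a)) measurable_const
  calc ∫⁻ s in Set.Ioc (0 : ℝ) T, jumpBound a c s
      = (∫⁻ s in Set.Ioc (0 : ℝ) T,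
          (if s < c then ENNReal.ofReal ((c - s) ^ (-a) / a) else 0)) +
        ∫⁻ s in Set.Ioc (0 : ℝ) T,
          (if c < s then ENNReal.ofReal ((s - c) ^ (-a) / a) else 0) := by
        unfold jumpBound
        exact lintegral_add_left hmeas _
    _ ≤ ENNReal.ofReal (T ^ (1 - a) / (a * (1 - a))) +
        ENNReal.ofReal (T ^ (1 - a) / (a * (1 - a))) :=
        add_le_add (outer_bound1 ha0 ha1 hc0 hcT) (outer_bound2 ha0 ha1 hc0 hcT hT)
    _ = 2 * ENNReal.ofReal (T ^ (1 - a) / (a * (1 - a))) := (two_mul _).symm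

/-- For `σp < 1` and jump points `c_1, …, c_n ∈ [0,T]`, the function
`f = ∑_{k=1}^n I_{c_k}` satisfies
`∫₀^T ∫₀^T |f(t) - f(s)|^p / |t-s|^{1+σp} dt ds ≤ n^p (2/(σp(1-σp))) T^{1-σp}`. -/
theorem sum_jump_indicators_sobolev (T σ p : ℝ) (hT : 0 < T)
    (hσ : σ ∈ Set.Ioo (0 : ℝ) 1) (hp : 1 ≤ p) (hσp : σ * p < 1)
    (n : ℕ) (c : Fin n → ℝ) (hc : ∀ k, c k ∈ Set.Icc (0 : ℝ) T) :
    slobodeckijSeminorm T σ p (fun t => ∑ k, jumpInd (c k) t) ≤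
      ENNReal.ofReal ((n : ℝ) ^ p * (2 / (σ * p * (1 - σ * p)) * T ^ (1 - σ * p))) := by
  have hp0 : (0:ℝ) < p := lt_of_lt_of_le one_pos hp
  set a := σ * p with ha
  have ha0 : 0 < a := mul_pos hσ.1 hp0
  have ha1 : a < 1 := hσp
  have hT0 : (0:ℝ) ≤ T := hT.le
  rcases Nat.eq_zero_or_pos n with hn | hn
  · subst hn
    simp only [slobodeckijSeminorm]
    have hz : ∀ s t : ℝ, ENNReal.ofReal
        (|(∑ k : Fin 0, jumpInd (c k) t) - ∑ k : Fin 0, jumpInd (c k) s| ^ p /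
          |t - s| ^ (1 + a)) = 0 := by
      intro s t
      simp [Real.zero_rpow (ne_of_gt hp0)]
    simp only [← ha, hz, lintegral_zero]
    exact zero_le
  set E := T ^ (1 - a) / (a * (1 - a)) with hE
  have step1 : ∀ᵐ s ∂(volume.restrict (Set.Ioc (0:ℝ) T)),
      (∫⁻ t in Set.Ioc (0:ℝ) T, ENNReal.ofReal
          (|(∑ k, jumpInd (c k) t) - ∑ k, jumpInd (c k) s| ^ p / |t - s| ^ (1 + a))) ≤
        ENNReal.ofReal ((n:ℝ) ^ (p - 1)) * ∑ k, jumpBound a (c k) s := by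
    have hne : ∀ᵐ (s:ℝ) ∂(volume : Measure ℝ), ∀ k : Fin n, s ≠ c k := by
      rw [MeasureTheory.ae_all_iff]
      intro k
      rw [MeasureTheory.ae_iff]
      simp
    filter_upwards [hne.filter_mono (ae_mono Measure.restrict_le_self)] with s hs
    calc ∫⁻ t in Set.Ioc (0:ℝ) T, ENNReal.ofReal
            (|(∑ k, jumpInd (c k) t) - ∑ k, jumpInd (c k) s| ^ p / |t - s| ^ (1 + a))
        ≤ ∫⁻ t in Set.Ioc (0:ℝ) T, ENNReal.ofReal ((n:ℝ) ^ (p - 1)) *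
            ∑ k, ENNReal.ofReal (|jumpInd (c k) t - jumpInd (c k) s| / |t - s| ^ (1 + a)) :=
          lintegral_mono fun t => pointwise_ennreal n c hp t s
      _ = ENNReal.ofReal ((n:ℝ) ^ (p - 1)) * ∑ k, ∫⁻ t in Set.Ioc (0:ℝ) T,
            ENNReal.ofReal (|jumpInd (c k) t - jumpInd (c k) s| / |t - s| ^ (1 + a)) := by
          rw [lintegral_const_mul' _ _ ENNReal.ofReal_ne_top,
            lintegral_finset_sum _ fun k _ => measurable_term (c k) s a]
      _ ≤ ENNReal.ofReal ((n:ℝ) ^ (p - 1)) * ∑ k, jumpBound a (c k) s :=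
          mul_le_mul_right (Finset.sum_le_sum fun k _ =>
            inner_total ha0 (hc k).1 (hc k).2 (hs k)) _
  calc slobodeckijSeminorm T σ p (fun t => ∑ k, jumpInd (c k) t)
      ≤ ∫⁻ s in Set.Ioc (0:ℝ) T,
          ENNReal.ofReal ((n:ℝ) ^ (p - 1)) * ∑ k, jumpBound a (c k) s := by
        simp only [slobodeckijSeminorm]
        exact lintegral_mono_ae step1
    _ = ENNReal.ofReal ((n:ℝ) ^ (p - 1)) *
          ∑ k, ∫⁻ s in Set.Ioc (0:ℝ) T, jumpBound a (c k) s := by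
        rw [lintegral_const_mul' _ _ ENNReal.ofReal_ne_top,
          lintegral_finset_sum _ fun k _ => measurable_jumpBound a (c k)]
    _ ≤ ENNReal.ofReal ((n:ℝ) ^ (p - 1)) *
          ∑ _k : Fin n, (2 * ENNReal.ofReal E) :=
        mul_le_mul_right (Finset.sum_le_sum fun k _ =>
          lintegral_jumpBound ha0 ha1 (hc k).1 (hc k).2 hT0) _
    _ = ENNReal.ofReal ((n:ℝ) ^ (p - 1)) * ((n : ENNReal) * (2 * ENNReal.ofReal E)) := by
        rw [Finset.sum_const, Finset.card_univ, Fintype.card_fin, nsmul_eq_mul]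
    _ ≤ ENNReal.ofReal ((n : ℝ) ^ p * (2 / (a * (1 - a)) * T ^ (1 - a))) := by
        rw [← ENNReal.ofReal_natCast n, ← ENNReal.ofReal_ofNat 2,
          ← ENNReal.ofReal_mul (by norm_num : (0:ℝ) ≤ 2),
          ← ENNReal.ofReal_mul (Nat.cast_nonneg n),
          ← ENNReal.ofReal_mul (Real.rpow_nonneg (Nat.cast_nonneg n) _)]
        refine ENNReal.ofReal_le_ofReal (le_of_eq ?_)
        have hnpos : (0:ℝ) < (n:ℝ) := Nat.cast_pos.2 hn
        have hnp : (n:ℝ) ^ (p - 1) * (n:ℝ) = (n:ℝ) ^ p := by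
          nth_rewrite 2 [← Real.rpow_one (n:ℝ)]
          rw [← Real.rpow_add hnpos]
          norm_num
        calc (n:ℝ) ^ (p - 1) * ((n:ℝ) * (2 * E))
            = ((n:ℝ) ^ (p - 1) * (n:ℝ)) * (2 * E) := by ring
          _ = (n:ℝ) ^ p * (2 * E) := by rw [hnp]
          _ = (n:ℝ) ^ p * (2 / (a * (1 - a)) * T ^ (1 - a)) := by rw [hE]; ring
end

section
/- Let T ∈ (0, ∞), σ ∈ (0, 1) and p ∈ [1, ∞) with σp < 1. Let (Ω, ℱ, μ) be a probability space and let Π : [0, T] × Ω → ℕ be a process such that for μ-almost every ω the path t ↦ Π(t, ω) is nondecreasing with Π(0, ω) = 0 and Π(T, ω) < ∞. Then for μ-almost every ω one has ∫₀^T ∫₀^T |Π(t, ω) − Π(s, ω)|^p / |t − s|^{1 + σp} dt ds < ∞, i.e. almost every sample path of Π belongs to the fractional Sobolev space W^{σ,p}(0, T). -/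
open MeasureTheory

section Aux
open Set

private lemma lint_Ioi_rpow (r c : ℝ) (hr : 0 < r) (hc : 0 < c) :
    ∫⁻ t in Set.Ioi c, ENNReal.ofReal (t ^ (-(1+r))) = ENNReal.ofReal (c ^ (-r) / r) := by
  rw [← ofReal_integral_eq_lintegral_ofReal
    (integrableOn_Ioi_rpow_of_lt (by linarith) hc)
    ((ae_restrict_iff' measurableSet_Ioi).2 (Filter.Eventually.of_forall fun x hx =>
      Real.rpow_nonneg (le_of_lt (lt_trans hc hx)) _))]
  rw [integral_Ioi_rpow_of_lt (by linarith) hc]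
  ring_nf

private lemma lint_shift (r a s : ℝ) (hr : 0 < r) (hs : s < a) :
    ∫⁻ t in Set.Ioi a, ENNReal.ofReal ((t - s) ^ (-(1+r))) = ENNReal.ofReal ((a - s) ^ (-r) / r) := by
  have h := (measurePreserving_add_right volume s).setLIntegral_comp_emb
      (measurableEmbedding_addRight s)
      (fun t => ENNReal.ofReal ((t - s) ^ (-(1+r)))) (Ioi (a - s))
  rw [Set.image_add_const_Ioi, sub_add_cancel] at h
  simp only [add_sub_cancel_right] at h
  rw [← h, lint_Ioi_rpow r (a - s) hr (by linarith)]

private lemma lint_shift' (r a s : ℝ) (hr : 0 < r) (hs : a < s) :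
    ∫⁻ t in Set.Iic a, ENNReal.ofReal ((s - t) ^ (-(1+r))) = ENNReal.ofReal ((s - a) ^ (-r) / r) := by
  have h := (Measure.measurePreserving_sub_left volume s).setLIntegral_comp_emb
      (MeasurableEquiv.subLeft s).measurableEmbedding
      (fun t => ENNReal.ofReal ((s - t) ^ (-(1+r)))) (Ici (s - a))
  rw [Set.image_const_sub_Ici, sub_sub_cancel] at h
  simp only [sub_sub_cancel] at h
  rw [← h, setLIntegral_congr (Ioi_ae_eq_Ici (a := s - a)).symm,
    lint_Ioi_rpow r (s - a) hr (by linarith)]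

private lemma core (T r a : ℝ) (hT : 0 < T) (hr0 : 0 < r) (hr1 : r < 1)
    (ha0 : 0 ≤ a) (haT : a ≤ T) :
    ∫⁻ s in Set.Ioc (0:ℝ) T, ∫⁻ t in Set.Ioc (0:ℝ) T,
      ENNReal.ofReal (if (s ≤ a ∧ a ≤ t) ∨ (t ≤ a ∧ a ≤ s) then |t - s| ^ (-(1+r)) else 0) < ⊤ := by
  have habs : ∀ x : ℝ, 0 ≤ x → |x| = x := fun x hx => abs_of_nonneg hx
  have hinner : ∀ s : ℝ, s ≠ a →
      (∫⁻ t in Set.Ioc (0:ℝ) T,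
        ENNReal.ofReal (if (s ≤ a ∧ a ≤ t) ∨ (t ≤ a ∧ a ≤ s) then |t - s| ^ (-(1+r)) else 0))
      ≤ ENNReal.ofReal (1/r) * ENNReal.ofReal (|a - s| ^ (-r)) := by
    intro s hs
    have key : ∀ b : ℝ, ENNReal.ofReal (1/r) * ENNReal.ofReal (b ^ (-r))
        = ENNReal.ofReal (b ^ (-r) / r) := by
      intro b
      rw [← ENNReal.ofReal_mul (by positivity), one_div, inv_mul_eq_div]
    rcases lt_or_gt_of_ne hs with hlt | hgt
    · have h1 : ∀ t : ℝ, ENNReal.ofReal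
            (if (s ≤ a ∧ a ≤ t) ∨ (t ≤ a ∧ a ≤ s) then |t - s| ^ (-(1+r)) else 0)
          ≤ (Set.Ici a).indicator (fun t => ENNReal.ofReal ((t - s) ^ (-(1+r)))) t := by
        intro t
        by_cases hc : (s ≤ a ∧ a ≤ t) ∨ (t ≤ a ∧ a ≤ s)
        · rcases hc with ⟨hc1, hc2⟩ | ⟨hc1, hc2⟩
          · rw [if_pos (Or.inl ⟨hc1, hc2⟩),
              Set.indicator_of_mem (Set.mem_Ici.mpr hc2), habs _ (by linarith)]
          · linarith
        · rw [if_neg hc]; simp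
      calc (∫⁻ t in Set.Ioc (0:ℝ) T, ENNReal.ofReal
            (if (s ≤ a ∧ a ≤ t) ∨ (t ≤ a ∧ a ≤ s) then |t - s| ^ (-(1+r)) else 0))
          ≤ ∫⁻ t in Set.Ioc (0:ℝ) T,
              (Set.Ici a).indicator (fun t => ENNReal.ofReal ((t - s) ^ (-(1+r)))) t :=
            lintegral_mono h1
        _ ≤ ∫⁻ t, (Set.Ici a).indicator (fun t => ENNReal.ofReal ((t - s) ^ (-(1+r)))) t :=
            setLIntegral_le_lintegral _ _
        _ = ∫⁻ t in Set.Ici a, ENNReal.ofReal ((t - s) ^ (-(1+r))) :=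
            lintegral_indicator measurableSet_Ici _
        _ = ∫⁻ t in Set.Ioi a, ENNReal.ofReal ((t - s) ^ (-(1+r))) :=
            setLIntegral_congr (Ioi_ae_eq_Ici (a := a)).symm
        _ = ENNReal.ofReal ((a - s) ^ (-r) / r) := lint_shift r a s hr0 hlt
        _ = ENNReal.ofReal (1/r) * ENNReal.ofReal (|a - s| ^ (-r)) := by
            rw [habs _ (by linarith), key]
    · have h1 : ∀ t : ℝ, ENNReal.ofReal
            (if (s ≤ a ∧ a ≤ t) ∨ (t ≤ a ∧ a ≤ s) then |t - s| ^ (-(1+r)) else 0)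
          ≤ (Set.Iic a).indicator (fun t => ENNReal.ofReal ((s - t) ^ (-(1+r)))) t := by
        intro t
        by_cases hc : (s ≤ a ∧ a ≤ t) ∨ (t ≤ a ∧ a ≤ s)
        · rcases hc with ⟨hc1, hc2⟩ | ⟨hc1, hc2⟩
          · linarith
          · rw [if_pos (Or.inr ⟨hc1, hc2⟩),
              Set.indicator_of_mem (Set.mem_Iic.mpr hc1), abs_sub_comm,
              habs _ (by linarith)]
        · rw [if_neg hc]; simp
      calc (∫⁻ t in Set.Ioc (0:ℝ) T, ENNReal.ofReal
            (if (s ≤ a ∧ a ≤ t) ∨ (t ≤ a ∧ a ≤ s) then |t - s| ^ (-(1+r)) else 0))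
          ≤ ∫⁻ t in Set.Ioc (0:ℝ) T,
              (Set.Iic a).indicator (fun t => ENNReal.ofReal ((s - t) ^ (-(1+r)))) t :=
            lintegral_mono h1
        _ ≤ ∫⁻ t, (Set.Iic a).indicator (fun t => ENNReal.ofReal ((s - t) ^ (-(1+r)))) t :=
            setLIntegral_le_lintegral _ _
        _ = ∫⁻ t in Set.Iic a, ENNReal.ofReal ((s - t) ^ (-(1+r))) :=
            lintegral_indicator measurableSet_Iic _
        _ = ENNReal.ofReal ((s - a) ^ (-r) / r) := lint_shift' r a s hr0 hgt
        _ = ENNReal.ofReal (1/r) * ENNReal.ofReal (|a - s| ^ (-r)) := by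
            rw [abs_sub_comm, habs _ (by linarith), key]
  have houter : (∫⁻ s in Set.Ioc (0:ℝ) T, ∫⁻ t in Set.Ioc (0:ℝ) T,
      ENNReal.ofReal (if (s ≤ a ∧ a ≤ t) ∨ (t ≤ a ∧ a ≤ s) then |t - s| ^ (-(1+r)) else 0))
      ≤ ∫⁻ s in Set.Ioc (0:ℝ) T,
          ENNReal.ofReal (1/r) * ENNReal.ofReal (|a - s| ^ (-r)) := by
    refine lintegral_mono_ae ?_
    have h0 : (volume.restrict (Set.Ioc (0:ℝ) T)) {a} = 0 :=
      le_antisymm (le_trans (Measure.restrict_apply_le _ _) (by simp)) (by simp)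
    refine (Filter.eventually_iff.2 ?_)
    refine measure_mono_null (fun s hs => ?_) h0
    by_contra hsa
    exact hs (hinner s (by simpa using hsa))
  rw [lintegral_const_mul' _ _ ENNReal.ofReal_ne_top] at houter
  have hsub : Set.Ioc (0:ℝ) T ⊆ Set.Ioo (a - T) a ∪ Set.Icc a (T + a) := by
    intro s hs
    rcases lt_or_ge s a with h | h
    · exact Or.inl ⟨by linarith [hs.1], h⟩
    · exact Or.inr ⟨h, by linarith [hs.2]⟩
  have hsplit : (∫⁻ s in Set.Ioc (0:ℝ) T, ENNReal.ofReal (|a - s| ^ (-r)))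
      ≤ (∫⁻ s in Set.Ioo (a - T) a, ENNReal.ofReal (|a - s| ^ (-r)))
        + ∫⁻ s in Set.Icc a (T + a), ENNReal.ofReal (|a - s| ^ (-r)) := by
    calc (∫⁻ s in Set.Ioc (0:ℝ) T, ENNReal.ofReal (|a - s| ^ (-r)))
        ≤ ∫⁻ s in Set.Ioo (a - T) a ∪ Set.Icc a (T + a), ENNReal.ofReal (|a - s| ^ (-r)) :=
          lintegral_mono_set hsub
      _ ≤ _ := by
          rw [← lintegral_add_measure]
          exact lintegral_mono' (Measure.restrict_union_le _ _) le_rfl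
  have h1 : (∫⁻ s in Set.Ioo (a - T) a, ENNReal.ofReal (|a - s| ^ (-r)))
      = ∫⁻ x in Set.Ioo (0:ℝ) T, ENNReal.ofReal (|a - (a - x)| ^ (-r)) := by
    have h := (Measure.measurePreserving_sub_left volume a).setLIntegral_comp_emb
        (MeasurableEquiv.subLeft a).measurableEmbedding
        (fun y => ENNReal.ofReal (|a - y| ^ (-r))) (Set.Ioo (0:ℝ) T)
    rw [Set.image_const_sub_Ioo, sub_zero] at h
    rw [← h]
  have h1' : (∫⁻ x in Set.Ioo (0:ℝ) T, ENNReal.ofReal (|a - (a - x)| ^ (-r)))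
      = ∫⁻ x in Set.Ioo (0:ℝ) T, ENNReal.ofReal (x ^ (-r)) := by
    refine setLIntegral_congr_fun measurableSet_Ioo
      (fun x hx => ?_)
    rw [show a - (a - x) = x by ring, habs _ (le_of_lt hx.1)]
  have h2 : (∫⁻ s in Set.Icc a (T + a), ENNReal.ofReal (|a - s| ^ (-r)))
      = ∫⁻ x in Set.Icc (0:ℝ) T, ENNReal.ofReal (|a - (x + a)| ^ (-r)) := by
    have h := (measurePreserving_add_right volume a).setLIntegral_comp_emb
        (measurableEmbedding_addRight a)
        (fun y => ENNReal.ofReal (|a - y| ^ (-r))) (Set.Icc (0:ℝ) T)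
    rw [Set.image_add_const_Icc, zero_add] at h
    rw [← h]
  have h2' : (∫⁻ x in Set.Icc (0:ℝ) T, ENNReal.ofReal (|a - (x + a)| ^ (-r)))
      = ∫⁻ x in Set.Icc (0:ℝ) T, ENNReal.ofReal (x ^ (-r)) := by
    refine setLIntegral_congr_fun measurableSet_Icc
      (fun x hx => ?_)
    rw [show a - (x + a) = -x by ring, abs_neg, habs _ hx.1]
  have hfinIoo : (∫⁻ x in Set.Ioo (0:ℝ) T, ENNReal.ofReal (x ^ (-r))) < ⊤ :=
    ((intervalIntegral.integrableOn_Ioo_rpow_iff hT).2 (by linarith)).lintegral_lt_top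
  have hfinIcc : (∫⁻ x in Set.Icc (0:ℝ) T, ENNReal.ofReal (x ^ (-r))) < ⊤ := by
    rw [setLIntegral_congr (Ioo_ae_eq_Icc (a := (0:ℝ)) (b := T)).symm]
    exact hfinIoo
  refine lt_of_le_of_lt houter (ENNReal.mul_lt_top ENNReal.ofReal_lt_top ?_)
  refine lt_of_le_of_lt hsplit ?_
  rw [h1, h1', h2, h2']
  exact ENNReal.add_lt_top.mpr ⟨hfinIoo, hfinIcc⟩

end Aux

/-- If the paths of an `ℕ`-valued process `Π` are almost surely nondecreasing on `[0,T]`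
with `Π(0) = 0`, then for `σ ∈ (0,1)`, `p ∈ [1,∞)` with `σp < 1`, almost every sample path
has finite Sobolev–Slobodeckij double integral, i.e. belongs to `W^{σ,p}(0,T)`. -/
theorem poisson_paths_sobolev (T σ p : ℝ) (hT : 0 < T)
    (hσ : σ ∈ Set.Ioo (0 : ℝ) 1) (hp : 1 ≤ p) (hσp : σ * p < 1)
    (Ω : Type) [MeasurableSpace Ω] (μ : Measure Ω) [IsProbabilityMeasure μ]
    (Po : ℝ → Ω → ℕ)
    (hpath : ∀ᵐ ω ∂μ, MonotoneOn (fun t => Po t ω) (Set.Icc 0 T) ∧ Po 0 ω = 0) :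
    ∀ᵐ ω ∂μ, slobodeckijSeminorm T σ p (fun t => (Po t ω : ℝ)) < ⊤ := by
  have hr0 : 0 < σ * p := mul_pos hσ.1 (lt_of_lt_of_le zero_lt_one hp)
  filter_upwards [hpath] with ω hω
  obtain ⟨hmono, -⟩ := hω
  set N : ℕ := Po T ω with hN
  set a : ℕ → ℝ := fun k => sInf {u : ℝ | u ∈ Set.Icc 0 T ∧ k < Po u ω} with ha
  -- the jump locations lie in [0, T]
  have hamem : ∀ k : ℕ, 0 ≤ a k ∧ a k ≤ T := by
    intro k
    by_cases hne : {u : ℝ | u ∈ Set.Icc 0 T ∧ k < Po u ω}.Nonempty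
    · constructor
      · exact le_csInf hne fun u hu => hu.1.1
      · obtain ⟨u, hu⟩ := hne
        exact le_trans (csInf_le ⟨0, fun x hx => hx.1.1⟩ hu) hu.1.2
    · rw [Set.not_nonempty_iff_eq_empty] at hne
      rw [ha]; simp only [hne, Real.sInf_empty]
      exact ⟨le_rfl, le_of_lt hT⟩
  -- counting bound
  have hcount : ∀ s t : ℝ, s ∈ Set.Ioc (0:ℝ) T → t ∈ Set.Ioc (0:ℝ) T → s ≤ t →
      ((Po t ω - Po s ω : ℕ) : ℝ) ≤ ∑ k ∈ Finset.range N,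
        (if (s ≤ a k ∧ a k ≤ t) ∨ (t ≤ a k ∧ a k ≤ s) then (1:ℝ) else 0) := by
    intro s t hs ht hst
    have hs' : s ∈ Set.Icc (0:ℝ) T := ⟨le_of_lt hs.1, hs.2⟩
    have ht' : t ∈ Set.Icc (0:ℝ) T := ⟨le_of_lt ht.1, ht.2⟩
    have hT' : T ∈ Set.Icc (0:ℝ) T := ⟨le_of_lt hT, le_rfl⟩
    have hmn : Po s ω ≤ Po t ω := hmono hs' ht' hst
    have hnN : Po t ω ≤ N := hmono ht' hT' ht.2
    have hIco : Finset.Ico (Po s ω) (Po t ω) ⊆ Finset.range N := by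
      intro k hk
      simp only [Finset.mem_Ico] at hk
      simp only [Finset.mem_range]
      omega
    have hcond : ∀ k ∈ Finset.Ico (Po s ω) (Po t ω),
        (s ≤ a k ∧ a k ≤ t) ∨ (t ≤ a k ∧ a k ≤ s) := by
      intro k hk
      simp only [Finset.mem_Ico] at hk
      have htS : t ∈ {u : ℝ | u ∈ Set.Icc 0 T ∧ k < Po u ω} := ⟨ht', hk.2⟩
      refine Or.inl ⟨?_, csInf_le ⟨0, fun x hx => hx.1.1⟩ htS⟩
      refine le_csInf ⟨t, htS⟩ fun u hu => ?_
      by_contra hcon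
      push_neg at hcon
      have h1 : Po u ω ≤ Po s ω := hmono hu.1 hs' (le_of_lt hcon)
      have h2 := hu.2
      omega
    calc ((Po t ω - Po s ω : ℕ) : ℝ)
        = ∑ _k ∈ Finset.Ico (Po s ω) (Po t ω), (1:ℝ) := by
          rw [Finset.sum_const, Nat.card_Ico, nsmul_eq_mul, mul_one]
      _ = ∑ k ∈ Finset.Ico (Po s ω) (Po t ω),
            (if (s ≤ a k ∧ a k ≤ t) ∨ (t ≤ a k ∧ a k ≤ s) then (1:ℝ) else 0) :=
          (Finset.sum_congr rfl fun k hk => (if_pos (hcond k hk)).symm)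
      _ ≤ _ := Finset.sum_le_sum_of_subset_of_nonneg hIco
          (fun k _ _ => by split_ifs; exacts [zero_le_one, le_rfl])
  -- pointwise bound on the integrand (real form), for s ≤ t
  have hptwise : ∀ s t : ℝ, s ∈ Set.Ioc (0:ℝ) T → t ∈ Set.Ioc (0:ℝ) T → s ≤ t →
      |((Po t ω : ℝ)) - (Po s ω : ℝ)| ^ p / |t - s| ^ (1 + σ * p)
      ≤ ((N:ℝ) ^ (p - 1)) * ∑ k ∈ Finset.range N,
        (if (s ≤ a k ∧ a k ≤ t) ∨ (t ≤ a k ∧ a k ≤ s)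
          then |t - s| ^ (-(1 + σ * p)) else 0) := by
    intro s t hs ht hst
    have hs' : s ∈ Set.Icc (0:ℝ) T := ⟨le_of_lt hs.1, hs.2⟩
    have ht' : t ∈ Set.Icc (0:ℝ) T := ⟨le_of_lt ht.1, ht.2⟩
    have hT' : T ∈ Set.Icc (0:ℝ) T := ⟨le_of_lt hT, le_rfl⟩
    have hmn : Po s ω ≤ Po t ω := hmono hs' ht' hst
    have hnN : Po t ω ≤ N := hmono ht' hT' ht.2
    set d : ℕ := Po t ω - Po s ω with hd
    have hvd : |((Po t ω : ℝ)) - (Po s ω : ℝ)| = (d : ℝ) := by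
      rw [hd, Nat.cast_sub hmn]
      exact abs_of_nonneg (by simp only [sub_nonneg, Nat.cast_le]; exact hmn)
    rw [hvd]
    have hsumnn : (0:ℝ) ≤ ∑ k ∈ Finset.range N,
        (if (s ≤ a k ∧ a k ≤ t) ∨ (t ≤ a k ∧ a k ≤ s)
          then |t - s| ^ (-(1 + σ * p)) else 0) := by
      refine Finset.sum_nonneg fun k _ => ?_
      split_ifs
      · exact Real.rpow_nonneg (abs_nonneg _) _
      · exact le_rfl
    rcases eq_or_lt_of_le hst with rfl | hlt
    · -- s = t : left side is 0
      have hd0 : d = 0 := by omega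
      rw [hd0]
      simp only [Nat.cast_zero]
      rw [Real.zero_rpow (by positivity : p ≠ 0), zero_div]
      exact mul_nonneg (Real.rpow_nonneg (Nat.cast_nonneg N) _) hsumnn
    · -- s < t
      have hdsum : (d:ℝ) ≤ ∑ k ∈ Finset.range N,
          (if (s ≤ a k ∧ a k ≤ t) ∨ (t ≤ a k ∧ a k ≤ s) then (1:ℝ) else 0) :=
        hcount s t hs ht hst
      have hdp : (d:ℝ) ^ p ≤ ((N:ℝ) ^ (p - 1)) * (d:ℝ) := by
        rcases Nat.eq_zero_or_pos d with h0 | h0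
        · rw [h0]
          simp only [Nat.cast_zero]
          rw [Real.zero_rpow (by positivity : p ≠ 0), mul_zero]
        · have hd1 : (1:ℝ) ≤ (d:ℝ) := by exact_mod_cast h0
          have hpos : (0:ℝ) < (d:ℝ) := by linarith
          have hdN : (d:ℝ) ≤ (N:ℝ) := by
            have : d ≤ N := by omega
            exact_mod_cast this
          have hkey : (d:ℝ) ^ p = (d:ℝ) ^ (p - 1) * (d:ℝ) ^ (1:ℝ) := by
            rw [← Real.rpow_add hpos]; norm_num
          rw [hkey, Real.rpow_one]
          exact mul_le_mul_of_nonneg_right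
            (Real.rpow_le_rpow (le_of_lt hpos) hdN (by linarith)) (le_of_lt hpos)
      have hkey2 : (d:ℝ) ^ p ≤ ((N:ℝ) ^ (p - 1)) * ∑ k ∈ Finset.range N,
          (if (s ≤ a k ∧ a k ≤ t) ∨ (t ≤ a k ∧ a k ≤ s) then (1:ℝ) else 0) :=
        le_trans hdp (mul_le_mul_of_nonneg_left hdsum
          (Real.rpow_nonneg (Nat.cast_nonneg N) _))
      have hsum_eq : (∑ k ∈ Finset.range N,
          (if (s ≤ a k ∧ a k ≤ t) ∨ (t ≤ a k ∧ a k ≤ s)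
            then |t - s| ^ (-(1 + σ * p)) else 0))
          = (∑ k ∈ Finset.range N,
            (if (s ≤ a k ∧ a k ≤ t) ∨ (t ≤ a k ∧ a k ≤ s) then (1:ℝ) else 0))
            * |t - s| ^ (-(1 + σ * p)) := by
        rw [Finset.sum_mul]
        refine Finset.sum_congr rfl fun k _ => ?_
        split_ifs
        · rw [one_mul]
        · rw [zero_mul]
      rw [div_eq_mul_inv, ← Real.rpow_neg (abs_nonneg _), hsum_eq, ← mul_assoc]
      exact mul_le_mul_of_nonneg_right hkey2 (Real.rpow_nonneg (abs_nonneg _) _)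
  -- the ENNReal-valued per-jump integrand
  set g : ℕ → ℝ → ℝ → ENNReal := fun k s t =>
    ENNReal.ofReal (if (s ≤ a k ∧ a k ≤ t) ∨ (t ≤ a k ∧ a k ≤ s)
      then |t - s| ^ (-(1 + σ * p)) else 0) with hg
  set C : ENNReal := ENNReal.ofReal ((N:ℝ) ^ (p - 1)) with hC
  -- ENNReal pointwise bound, for all s t in the square
  have hENN : ∀ s t : ℝ, s ∈ Set.Ioc (0:ℝ) T → t ∈ Set.Ioc (0:ℝ) T →
      ENNReal.ofReal (|((Po t ω : ℝ)) - (Po s ω : ℝ)| ^ p / |t - s| ^ (1 + σ * p))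
      ≤ C * ∑ k ∈ Finset.range N, g k s t := by
    intro s t hs ht
    have hreal : |((Po t ω : ℝ)) - (Po s ω : ℝ)| ^ p / |t - s| ^ (1 + σ * p)
        ≤ ((N:ℝ) ^ (p - 1)) * ∑ k ∈ Finset.range N,
          (if (s ≤ a k ∧ a k ≤ t) ∨ (t ≤ a k ∧ a k ≤ s)
            then |t - s| ^ (-(1 + σ * p)) else 0) := by
      rcases le_total s t with hst | hts
      · exact hptwise s t hs ht hst
      · have h := hptwise t s ht hs hts
        rw [abs_sub_comm ((Po s ω : ℝ)) ((Po t ω : ℝ)), abs_sub_comm s t] at h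
        refine le_trans h (le_of_eq ?_)
        congr 1
        refine Finset.sum_congr rfl fun k _ => ?_
        exact if_congr (or_comm) rfl rfl
    calc ENNReal.ofReal (|((Po t ω : ℝ)) - (Po s ω : ℝ)| ^ p / |t - s| ^ (1 + σ * p))
        ≤ ENNReal.ofReal (((N:ℝ) ^ (p - 1)) * ∑ k ∈ Finset.range N,
            (if (s ≤ a k ∧ a k ≤ t) ∨ (t ≤ a k ∧ a k ≤ s)
              then |t - s| ^ (-(1 + σ * p)) else 0)) := ENNReal.ofReal_le_ofReal hreal
      _ = C * ∑ k ∈ Finset.range N, g k s t := by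
          rw [ENNReal.ofReal_mul (Real.rpow_nonneg (Nat.cast_nonneg N) _)]
          congr 1
          rw [ENNReal.ofReal_sum_of_nonneg]
          intro k _
          split_ifs
          · exact Real.rpow_nonneg (abs_nonneg _) _
          · exact le_rfl
  -- measurability of the per-jump integrands
  have hgm : ∀ k : ℕ, Measurable (Function.uncurry
      (fun s t => g k s t)) := by
    intro k
    refine ENNReal.measurable_ofReal.comp (Measurable.ite ?_ ?_ measurable_const)
    · exact ((measurableSet_le measurable_fst measurable_const).inter
        (measurableSet_le measurable_const measurable_snd)).union
        ((measurableSet_le measurable_snd measurable_const).inter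
        (measurableSet_le measurable_const measurable_fst))
    · have h : Measurable (fun x : ℝ => x ^ (-(1 + σ * p))) := by measurability
      exact h.comp ((measurable_snd.sub measurable_fst).abs)
  -- assemble
  have step1 : slobodeckijSeminorm T σ p (fun t => (Po t ω : ℝ))
      ≤ ∫⁻ s in Set.Ioc (0:ℝ) T, (C * ∑ k ∈ Finset.range N,
          ∫⁻ t in Set.Ioc (0:ℝ) T, g k s t) := by
    rw [slobodeckijSeminorm]
    refine lintegral_mono_ae ((ae_restrict_iff' measurableSet_Ioc).2
      (Filter.Eventually.of_forall fun s hs => ?_))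
    calc (∫⁻ t in Set.Ioc (0:ℝ) T, ENNReal.ofReal
          (|((Po t ω : ℝ)) - (Po s ω : ℝ)| ^ p / |t - s| ^ (1 + σ * p)))
        ≤ ∫⁻ t in Set.Ioc (0:ℝ) T, (C * ∑ k ∈ Finset.range N, g k s t) := by
          refine lintegral_mono_ae ((ae_restrict_iff' measurableSet_Ioc).2
            (Filter.Eventually.of_forall fun t ht => ?_))
          exact hENN s t hs ht
      _ = C * ∑ k ∈ Finset.range N, ∫⁻ t in Set.Ioc (0:ℝ) T, g k s t := by
          rw [lintegral_const_mul' _ _ ENNReal.ofReal_ne_top,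
            lintegral_finset_sum _ (fun k _ =>
              show Measurable fun t => g k s t from (hgm k).comp measurable_prodMk_left)]
  have step2 : (∫⁻ s in Set.Ioc (0:ℝ) T, (C * ∑ k ∈ Finset.range N,
        ∫⁻ t in Set.Ioc (0:ℝ) T, g k s t))
      = C * ∑ k ∈ Finset.range N, ∫⁻ s in Set.Ioc (0:ℝ) T,
          ∫⁻ t in Set.Ioc (0:ℝ) T, g k s t := by
    rw [lintegral_const_mul' _ _ ENNReal.ofReal_ne_top,
      lintegral_finset_sum _ (fun k _ =>
        show Measurable fun s => ∫⁻ t in Set.Ioc (0:ℝ) T, g k s t from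
          (hgm k).lintegral_prod_right)]
  refine lt_of_le_of_lt (le_trans step1 (le_of_eq step2)) ?_
  refine ENNReal.mul_lt_top ENNReal.ofReal_lt_top ?_
  refine ENNReal.sum_lt_top.2 fun k _ => ?_
  exact core T (σ * p) (a k) hT hr0 hσp (hamem k).1 (hamem k).2
end

section
/- Let T ∈ (0, ∞) and γ ∈ (−1/2, 1/2] with γ ≠ 0, and define g : (0, T] → ℝ by g(t) = t^γ. Then ∫₀^T t^{2γ} dt < ∞, and for every σ ∈ (0, γ + 1/2) one has ∫₀^T ∫₀^T |t^γ − s^γ|² / |t − s|^{1 + 2σ} ds dt < ∞; in other words g ∈ W^{σ,2}(0, T) for every σ ∈ (0, γ + 1/2). -/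
open MeasureTheory Real Set

private lemma lint_finite_of_integrableOn {f : ℝ → ℝ} {s : Set ℝ}
    (hf : IntegrableOn f s) :
    ∫⁻ x in s, ENNReal.ofReal (f x) < ⊤ :=
  lt_of_le_of_lt (lintegral_mono fun x => Real.ofReal_le_enorm (f x)) hf.2

private lemma lint_rpow_Ioc {p c : ℝ} (hp : -1 < p) (hc : 0 ≤ c) :
    ∫⁻ s in Set.Ioc (0:ℝ) c, ENNReal.ofReal (s ^ p) =
      ENNReal.ofReal (c ^ (p+1) / (p+1)) := by
  have hint : IntegrableOn (fun s : ℝ => s ^ p) (Set.Ioc 0 c) :=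
    (intervalIntegral.intervalIntegrable_rpow' (a := 0) (b := c) hp).1
  rw [← ofReal_integral_eq_lintegral_ofReal hint ?_]
  · congr 1
    rw [← intervalIntegral.integral_of_le hc, integral_rpow (Or.inl hp),
      Real.zero_rpow (by linarith), sub_zero]
  · filter_upwards [ae_restrict_mem measurableSet_Ioc] with s hs
    exact Real.rpow_nonneg hs.1.le _

private lemma lint_rpow_Ioc_sub_left {p a b : ℝ} (hp : -1 < p) (hab : a ≤ b) :
    ∫⁻ s in Set.Ioc a b, ENNReal.ofReal ((b - s) ^ p) =
      ENNReal.ofReal ((b - a) ^ (p+1) / (p+1)) := by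
  have hint0 : IntervalIntegrable (fun s : ℝ => s ^ p) volume 0 (b - a) :=
    intervalIntegral.intervalIntegrable_rpow' hp
  have hint : IntegrableOn (fun s : ℝ => (b - s) ^ p) (Set.Ioc a b) := by
    have h := hint0.comp_sub_left b
    simpa using h.2
  rw [← ofReal_integral_eq_lintegral_ofReal hint ?_]
  · congr 1
    rw [← intervalIntegral.integral_of_le hab]
    have h := intervalIntegral.integral_comp_sub_left (a := a) (b := b)
      (fun s : ℝ => s ^ p) b
    simp only [sub_self] at h
    rw [h, integral_rpow (Or.inl hp), Real.zero_rpow (by linarith), sub_zero]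
  · filter_upwards [ae_restrict_mem measurableSet_Ioc] with s hs
    exact Real.rpow_nonneg (by linarith [hs.2] : (0:ℝ) ≤ b - s) _

private lemma lint_rpow_Ioc_sub_right {p a b : ℝ} (hp : -1 < p) (hab : a ≤ b) :
    ∫⁻ s in Set.Ioc a b, ENNReal.ofReal ((s - a) ^ p) =
      ENNReal.ofReal ((b - a) ^ (p+1) / (p+1)) := by
  have hint0 : IntervalIntegrable (fun s : ℝ => s ^ p) volume 0 (b - a) :=
    intervalIntegral.intervalIntegrable_rpow' hp
  have hint : IntegrableOn (fun s : ℝ => (s - a) ^ p) (Set.Ioc a b) := by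
    have h := hint0.comp_sub_right a
    simpa using h.1
  rw [← ofReal_integral_eq_lintegral_ofReal hint ?_]
  · congr 1
    rw [← intervalIntegral.integral_of_le hab]
    have h := intervalIntegral.integral_comp_sub_right (a := a) (b := b)
      (fun s : ℝ => s ^ p) a
    simp only [sub_self] at h
    rw [h, integral_rpow (Or.inl hp), Real.zero_rpow (by linarith), sub_zero]
  · filter_upwards [ae_restrict_mem measurableSet_Ioc] with s hs
    exact Real.rpow_nonneg (by linarith [hs.1] : (0:ℝ) ≤ s - a) _

private lemma pow_diff_bound {γ σ s t : ℝ} (hγ2 : γ ≤ 1/2) (hγ0 : γ ≠ 0)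
    (hσ1 : 0 < σ) (hσ2 : σ < γ + 1/2) (hs : 0 < s) (hst : s < t) :
    |t ^ γ - s ^ γ| ≤ s ^ ((γ - σ - 1/2)/2) * (t - s) ^ ((γ + σ + 1/2)/2) := by
  have ht : 0 < t := hs.trans hst
  have hts : 0 < t - s := sub_pos.2 hst
  have hdnn : (0:ℝ) ≤ (t - s)/s := div_nonneg hts.le hs.le
  have hxnn : (-1:ℝ) ≤ (t - s)/s := le_trans (by norm_num) hdnn
  have h1s : 1 + (t - s)/s = t/s := by field_simp; ring
  rcases lt_or_gt_of_ne hγ0 with hneg | hpos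
  · -- case γ < 0
    set θ : ℝ := (γ + σ + 1/2)/2 with hθ
    have hθ0 : 0 < θ := by rw [hθ]; linarith
    have hθ1 : θ < 1 := by rw [hθ]; linarith
    have htγ : t ^ γ ≤ s ^ γ := Real.rpow_le_rpow_of_nonpos hs hst.le hneg.le
    have htγ0 : 0 ≤ t ^ γ := Real.rpow_nonneg ht.le _
    have habs : |t ^ γ - s ^ γ| = s ^ γ - t ^ γ := by
      rw [abs_sub_comm]; exact abs_of_nonneg (by linarith)
    have B1 : s ^ γ - t ^ γ ≤ s ^ γ := by linarith
    have B2 : s ^ γ - t ^ γ ≤ (-γ) * (s ^ (γ - 1) * (t - s)) := by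
      have hb : (1 + (t - s)/s) ^ (-γ) ≤ 1 + (-γ) * ((t - s)/s) :=
        rpow_one_add_le_one_add_mul_self hxnn (by linarith) (by linarith)
      rw [h1s] at hb
      have h2 : (t/s) ^ (-γ) = t ^ (-γ) * s ^ γ := by
        rw [Real.div_rpow ht.le hs.le, Real.rpow_neg hs.le, div_eq_mul_inv, inv_inv]
      have h3 : t ^ γ * (t ^ (-γ) * s ^ γ) = s ^ γ := by
        rw [← mul_assoc, ← Real.rpow_add ht, add_neg_cancel, Real.rpow_zero, one_mul]
      have h4 : t ^ γ * (t/s) ^ (-γ) ≤ t ^ γ * (1 + (-γ) * ((t - s)/s)) :=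
        mul_le_mul_of_nonneg_left hb htγ0
      rw [h2, h3] at h4
      have h5 : t ^ γ * (-γ) * ((t - s)/s) ≤ s ^ γ * (-γ) * ((t - s)/s) :=
        mul_le_mul_of_nonneg_right (mul_le_mul_of_nonneg_right htγ (by linarith)) hdnn
      have h6 : s ^ γ * (-γ) * ((t - s)/s) = (-γ) * (s ^ (γ - 1) * (t - s)) := by
        rw [Real.rpow_sub hs, Real.rpow_one, div_eq_mul_inv, div_eq_mul_inv]; ring
      calc s ^ γ - t ^ γ ≤ t ^ γ * (1 + (-γ) * ((t - s)/s)) - t ^ γ := by linarith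
        _ = t ^ γ * (-γ) * ((t - s)/s) := by ring
        _ ≤ s ^ γ * (-γ) * ((t - s)/s) := h5
        _ = (-γ) * (s ^ (γ - 1) * (t - s)) := h6
    rw [habs]
    rcases eq_or_lt_of_le (by linarith : (0:ℝ) ≤ s ^ γ - t ^ γ) with hD | hD
    · rw [← hD]
      exact mul_nonneg (Real.rpow_nonneg hs.le _) (Real.rpow_nonneg hts.le _)
    · have h7 : ((-γ) * (s ^ (γ - 1) * (t - s))) ^ θ
          = (-γ) ^ θ * ((s ^ (γ - 1)) ^ θ * (t - s) ^ θ) := by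
        rw [Real.mul_rpow (by linarith) (mul_nonneg (Real.rpow_nonneg hs.le _) hts.le),
          Real.mul_rpow (Real.rpow_nonneg hs.le _) hts.le]
      have h8 : (s ^ γ) ^ (1 - θ) * ((s ^ (γ - 1)) ^ θ * (t - s) ^ θ)
          = s ^ ((γ - σ - 1/2)/2) * (t - s) ^ θ := by
        have e : (s ^ γ) ^ (1 - θ) * ((s ^ (γ - 1)) ^ θ * (t - s) ^ θ)
            = s ^ (γ * (1 - θ)) * s ^ ((γ - 1) * θ) * (t - s) ^ θ := by
          rw [← Real.rpow_mul hs.le, ← Real.rpow_mul hs.le]; ring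
        rw [e, ← Real.rpow_add hs]
        congr 2
        rw [hθ]; ring
      have hγθ : (-γ) ^ θ ≤ 1 := Real.rpow_le_one (by linarith) (by linarith) hθ0.le
      have hrnn : 0 ≤ (s ^ γ) ^ (1 - θ) * ((s ^ (γ - 1)) ^ θ * (t - s) ^ θ) :=
        mul_nonneg (Real.rpow_nonneg (Real.rpow_nonneg hs.le _) _)
          (mul_nonneg (Real.rpow_nonneg (Real.rpow_nonneg hs.le _) _)
            (Real.rpow_nonneg hts.le _))
      calc s ^ γ - t ^ γ
          = (s ^ γ - t ^ γ) ^ (1 - θ) * (s ^ γ - t ^ γ) ^ θ := by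
            rw [← Real.rpow_add hD, sub_add_cancel, Real.rpow_one]
        _ ≤ (s ^ γ) ^ (1 - θ) * ((-γ) * (s ^ (γ - 1) * (t - s))) ^ θ :=
            mul_le_mul (Real.rpow_le_rpow hD.le B1 (by linarith))
              (Real.rpow_le_rpow hD.le B2 hθ0.le) (Real.rpow_nonneg hD.le _)
              (Real.rpow_nonneg (Real.rpow_nonneg hs.le _) _)
        _ = (-γ) ^ θ * ((s ^ γ) ^ (1 - θ) * ((s ^ (γ - 1)) ^ θ * (t - s) ^ θ)) := by
            rw [h7]; ring
        _ ≤ 1 * ((s ^ γ) ^ (1 - θ) * ((s ^ (γ - 1)) ^ θ * (t - s) ^ θ)) :=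
            mul_le_mul_of_nonneg_right hγθ hrnn
        _ = s ^ ((γ - σ - 1/2)/2) * (t - s) ^ θ := by rw [one_mul, h8]
  · -- case γ > 0
    set lam : ℝ := (σ - γ + 1/2)/(2*(1 - γ)) with hlam
    have h1γ : 0 < 1 - γ := by linarith
    have hlam0 : 0 ≤ lam := by
      rw [hlam]
      exact div_nonneg (by linarith) (by linarith)
    have hlam1 : lam ≤ 1 := by
      rw [hlam, div_le_one (by linarith)]; linarith
    have hsγ : s ^ γ ≤ t ^ γ := Real.rpow_le_rpow hs.le hst.le hpos.le
    have habs : |t ^ γ - s ^ γ| = t ^ γ - s ^ γ := abs_of_nonneg (by linarith)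
    have B1 : t ^ γ - s ^ γ ≤ (t - s) ^ γ := by
      have u1 : (t - s)/t ≤ ((t - s)/t) ^ γ := by
        have h := Real.rpow_le_rpow_of_exponent_ge (div_pos hts ht)
          (by rw [div_le_one ht]; linarith) (le_of_lt (lt_of_le_of_lt hγ2 (by norm_num)) : γ ≤ 1)
        rwa [Real.rpow_one] at h
      have u2 : s/t ≤ (s/t) ^ γ := by
        have h := Real.rpow_le_rpow_of_exponent_ge (div_pos hs ht)
          (by rw [div_le_one ht]; linarith) (le_of_lt (lt_of_le_of_lt hγ2 (by norm_num)) : γ ≤ 1)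
        rwa [Real.rpow_one] at h
      have hsum : (t - s)/t + s/t = 1 := by field_simp; ring
      have mult : t ^ γ * 1 ≤ t ^ γ * (((t - s)/t) ^ γ + (s/t) ^ γ) :=
        mul_le_mul_of_nonneg_left (by linarith) (Real.rpow_nonneg ht.le _)
      have m1 : t ^ γ * ((t - s)/t) ^ γ = (t - s) ^ γ := by
        rw [← Real.mul_rpow ht.le (div_nonneg hts.le ht.le)]
        congr 1; field_simp
      have m2 : t ^ γ * (s/t) ^ γ = s ^ γ := by
        rw [← Real.mul_rpow ht.le (div_nonneg hs.le ht.le)]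
        congr 1; field_simp
      rw [mul_one, mul_add, m1, m2] at mult
      linarith
    have B2 : t ^ γ - s ^ γ ≤ γ * (s ^ (γ - 1) * (t - s)) := by
      have hb : (1 + (t - s)/s) ^ γ ≤ 1 + γ * ((t - s)/s) :=
        rpow_one_add_le_one_add_mul_self hxnn hpos.le (by linarith)
      rw [h1s] at hb
      have h2 : s ^ γ * (t/s) ^ γ = t ^ γ := by
        rw [← Real.mul_rpow hs.le (div_nonneg ht.le hs.le)]
        congr 1; field_simp
      have h4 : s ^ γ * (t/s) ^ γ ≤ s ^ γ * (1 + γ * ((t - s)/s)) :=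
        mul_le_mul_of_nonneg_left hb (Real.rpow_nonneg hs.le _)
      rw [h2] at h4
      have h6 : s ^ γ * (1 + γ * ((t - s)/s)) = s ^ γ + γ * (s ^ (γ - 1) * (t - s)) := by
        rw [Real.rpow_sub hs, Real.rpow_one, div_eq_mul_inv, div_eq_mul_inv]; ring
      rw [h6] at h4
      linarith
    rw [habs]
    rcases eq_or_lt_of_le (by linarith : (0:ℝ) ≤ t ^ γ - s ^ γ) with hD | hD
    · rw [← hD]
      exact mul_nonneg (Real.rpow_nonneg hs.le _) (Real.rpow_nonneg hts.le _)
    · have h7 : (γ * (s ^ (γ - 1) * (t - s))) ^ lam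
          = γ ^ lam * ((s ^ (γ - 1)) ^ lam * (t - s) ^ lam) := by
        rw [Real.mul_rpow hpos.le (mul_nonneg (Real.rpow_nonneg hs.le _) hts.le),
          Real.mul_rpow (Real.rpow_nonneg hs.le _) hts.le]
      have h8 : ((t - s) ^ γ) ^ (1 - lam) * ((s ^ (γ - 1)) ^ lam * (t - s) ^ lam)
          = s ^ ((γ - σ - 1/2)/2) * (t - s) ^ ((γ + σ + 1/2)/2) := by
        have e : ((t - s) ^ γ) ^ (1 - lam) * ((s ^ (γ - 1)) ^ lam * (t - s) ^ lam)
            = s ^ ((γ - 1) * lam) * ((t - s) ^ (γ * (1 - lam)) * (t - s) ^ lam) := by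
          rw [← Real.rpow_mul hts.le, ← Real.rpow_mul hs.le]; ring
        rw [e, ← Real.rpow_add hts]
        have e1 : (γ - 1) * lam = (γ - σ - 1/2)/2 := by
          rw [hlam]; field_simp; ring
        have e2 : γ * (1 - lam) + lam = (γ + σ + 1/2)/2 := by
          rw [hlam]; field_simp; ring
        rw [e1, e2]
      have hγlam : γ ^ lam ≤ 1 := Real.rpow_le_one hpos.le (by linarith) hlam0
      have hrnn : 0 ≤ ((t - s) ^ γ) ^ (1 - lam) * ((s ^ (γ - 1)) ^ lam * (t - s) ^ lam) :=
        mul_nonneg (Real.rpow_nonneg (Real.rpow_nonneg hts.le _) _)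
          (mul_nonneg (Real.rpow_nonneg (Real.rpow_nonneg hs.le _) _)
            (Real.rpow_nonneg hts.le _))
      calc t ^ γ - s ^ γ
          = (t ^ γ - s ^ γ) ^ (1 - lam) * (t ^ γ - s ^ γ) ^ lam := by
            rw [← Real.rpow_add hD, sub_add_cancel, Real.rpow_one]
        _ ≤ ((t - s) ^ γ) ^ (1 - lam) * (γ * (s ^ (γ - 1) * (t - s))) ^ lam :=
            mul_le_mul (Real.rpow_le_rpow hD.le B1 (by linarith))
              (Real.rpow_le_rpow hD.le B2 hlam0) (Real.rpow_nonneg hD.le _)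
              (Real.rpow_nonneg (Real.rpow_nonneg hts.le _) _)
        _ = γ ^ lam * (((t - s) ^ γ) ^ (1 - lam) * ((s ^ (γ - 1)) ^ lam * (t - s) ^ lam)) := by
            rw [h7]; ring
        _ ≤ 1 * (((t - s) ^ γ) ^ (1 - lam) * ((s ^ (γ - 1)) ^ lam * (t - s) ^ lam)) :=
            mul_le_mul_of_nonneg_right hγlam hrnn
        _ = s ^ ((γ - σ - 1/2)/2) * (t - s) ^ ((γ + σ + 1/2)/2) := by rw [one_mul, h8]

private lemma ratio_bound {γ σ s t : ℝ} (hγ2 : γ ≤ 1/2) (hγ0 : γ ≠ 0)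
    (hσ1 : 0 < σ) (hσ2 : σ < γ + 1/2) (hs : 0 < s) (hst : s < t) :
    |t ^ γ - s ^ γ| ^ 2 / |t - s| ^ (1 + 2*σ)
      ≤ s ^ (γ - σ - 1/2) * |t - s| ^ (γ - σ - 1/2) := by
  have hts : 0 < t - s := sub_pos.2 hst
  rw [abs_of_pos hts]
  rw [div_le_iff₀ (Real.rpow_pos_of_pos hts _)]
  have P := pow_diff_bound hγ2 hγ0 hσ1 hσ2 hs hst
  have hrnn : 0 ≤ s ^ ((γ - σ - 1/2)/2) * (t - s) ^ ((γ + σ + 1/2)/2) :=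
    mul_nonneg (Real.rpow_nonneg hs.le _) (Real.rpow_nonneg hts.le _)
  calc |t ^ γ - s ^ γ| ^ 2
      = |t ^ γ - s ^ γ| * |t ^ γ - s ^ γ| := pow_two _
    _ ≤ (s ^ ((γ - σ - 1/2)/2) * (t - s) ^ ((γ + σ + 1/2)/2)) *
        (s ^ ((γ - σ - 1/2)/2) * (t - s) ^ ((γ + σ + 1/2)/2)) :=
        mul_le_mul P P (abs_nonneg _) hrnn
    _ = s ^ ((γ - σ - 1/2)/2 + (γ - σ - 1/2)/2) *
        (t - s) ^ ((γ + σ + 1/2)/2 + (γ + σ + 1/2)/2) := by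
        rw [Real.rpow_add hs, Real.rpow_add hts]; ring
    _ = s ^ (γ - σ - 1/2) * (t - s) ^ (γ - σ - 1/2) * (t - s) ^ (1 + 2*σ) := by
        rw [mul_assoc, ← Real.rpow_add hts]
        congr 2 <;> ring

/-- For `γ ∈ (-1/2, 1/2]`, `γ ≠ 0`, the function `g(t) = t^γ` satisfies
`∫₀^T t^{2γ} dt < ∞` and, for every `σ ∈ (0, γ + 1/2)`,
`∫₀^T ∫₀^T |t^γ - s^γ|² / |t-s|^{1+2σ} ds dt < ∞`; that is, `g ∈ W^{σ,2}(0,T)`. -/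
theorem power_function_sobolev (T γ : ℝ) (hT : 0 < T)
    (hγ1 : -(1 / 2) < γ) (hγ2 : γ ≤ 1 / 2) (hγ0 : γ ≠ 0) :
    (∫⁻ t in Set.Ioc (0 : ℝ) T, ENNReal.ofReal (t ^ (2 * γ)) < ⊤) ∧
    ∀ σ ∈ Set.Ioo (0 : ℝ) (γ + 1 / 2),
      ∫⁻ t in Set.Ioc (0 : ℝ) T, ∫⁻ s in Set.Ioc (0 : ℝ) T,
        ENNReal.ofReal (|t ^ γ - s ^ γ| ^ 2 / |t - s| ^ (1 + 2 * σ)) < ⊤ := by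
  constructor
  · exact lint_finite_of_integrableOn
      (intervalIntegral.intervalIntegrable_rpow' (by linarith)).1
  rintro σ ⟨hσ1, hσ2⟩
  have hβ1 : (-1:ℝ) < γ - σ - 1/2 := by linarith
  have hβ0 : γ - σ - 1/2 < 0 := by linarith
  set β : ℝ := γ - σ - 1/2 with hβ
  have hβp : (0:ℝ) < β + 1 := by linarith
  set c₂ : ℝ := T ^ (β+1) / (β+1) with hc₂
  have hc₂0 : 0 ≤ c₂ := div_nonneg (Real.rpow_nonneg hT.le _) hβp.le
  set c₁ : ℝ := (2:ℝ)⁻¹ ^ (2*β+1) / (β+1) with hc₁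
  have hc₁0 : 0 ≤ c₁ := div_nonneg (Real.rpow_nonneg (by norm_num) _) hβp.le
  have key : ∀ t ∈ Set.Ioc (0:ℝ) T,
      (∫⁻ s in Set.Ioc (0:ℝ) T,
        ENNReal.ofReal (|t ^ γ - s ^ γ| ^ 2 / |t - s| ^ (1 + 2 * σ)))
        ≤ ENNReal.ofReal (2*c₁ * t ^ (2*β+1) + t ^ β * c₂) := by
    rintro t ⟨ht, htT⟩
    have ht2 : (0:ℝ) < t/2 := half_pos ht
    have ha1 : 0 ≤ c₁ * t ^ (2*β+1) := mul_nonneg hc₁0 (Real.rpow_nonneg ht.le _)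
    have hb1 : 0 ≤ t ^ β * c₂ := mul_nonneg (Real.rpow_nonneg ht.le _) hc₂0
    have step1 : (∫⁻ s in Set.Ioc (0:ℝ) T,
        ENNReal.ofReal (|t ^ γ - s ^ γ| ^ 2 / |t - s| ^ (1 + 2 * σ)))
        ≤ ∫⁻ s in Set.Ioc (0:ℝ) T, ENNReal.ofReal (min s t ^ β * |t - s| ^ β) := by
      refine setLIntegral_mono' measurableSet_Ioc ?_
      rintro s ⟨hs0, hsT⟩
      refine ENNReal.ofReal_le_ofReal ?_
      rcases lt_trichotomy s t with hlt | heq | hgt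
      · rw [min_eq_left hlt.le]
        exact ratio_bound (by linarith) hγ0 hσ1 (by linarith) hs0 hlt
      · subst heq
        simp [sub_self, abs_zero, Real.zero_rpow hβ0.ne,
          Real.zero_rpow (show (1:ℝ) + 2*σ ≠ 0 by positivity), div_zero]
      · rw [min_eq_right hgt.le, abs_sub_comm t s, abs_sub_comm (t ^ γ) (s ^ γ)]
        exact ratio_bound (by linarith) hγ0 hσ1 (by linarith) ht hgt
    have step2 : (∫⁻ s in Set.Ioc (0:ℝ) T, ENNReal.ofReal (min s t ^ β * |t - s| ^ β))
        = (∫⁻ s in Set.Ioc (0:ℝ) t, ENNReal.ofReal (min s t ^ β * |t - s| ^ β))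
          + ∫⁻ s in Set.Ioc t T, ENNReal.ofReal (min s t ^ β * |t - s| ^ β) := by
      rw [← Set.Ioc_union_Ioc_eq_Ioc ht.le htT,
        lintegral_union measurableSet_Ioc (Set.Ioc_disjoint_Ioc_of_le le_rfl)]
    have stepB : (∫⁻ s in Set.Ioc t T, ENNReal.ofReal (min s t ^ β * |t - s| ^ β))
        ≤ ENNReal.ofReal (t ^ β * c₂) := by
      have congrB : (∫⁻ s in Set.Ioc t T, ENNReal.ofReal (min s t ^ β * |t - s| ^ β))
          = ∫⁻ s in Set.Ioc t T, ENNReal.ofReal (t ^ β) * ENNReal.ofReal ((s - t) ^ β) := by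
        refine setLIntegral_congr_fun measurableSet_Ioc ?_
        rintro s ⟨hts', hsT⟩
        beta_reduce
        rw [min_eq_right hts'.le, abs_sub_comm, abs_of_pos (sub_pos.2 hts'),
          ENNReal.ofReal_mul (Real.rpow_nonneg ht.le _)]
      rw [congrB, lintegral_const_mul' _ _ ENNReal.ofReal_ne_top,
        lint_rpow_Ioc_sub_right hβ1 htT]
      have hTle : (T - t) ^ (β+1) / (β+1) ≤ c₂ := by
        rw [hc₂]
        gcongr
        · linarith
      calc ENNReal.ofReal (t ^ β) * ENNReal.ofReal ((T - t) ^ (β+1) / (β+1))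
          ≤ ENNReal.ofReal (t ^ β) * ENNReal.ofReal c₂ :=
            mul_le_mul_right (ENNReal.ofReal_le_ofReal hTle) _
        _ = ENNReal.ofReal (t ^ β * c₂) :=
            (ENNReal.ofReal_mul (Real.rpow_nonneg ht.le _)).symm
    have congrA : (∫⁻ s in Set.Ioc (0:ℝ) t, ENNReal.ofReal (min s t ^ β * |t - s| ^ β))
        = ∫⁻ s in Set.Ioc (0:ℝ) t, ENNReal.ofReal (s ^ β * (t - s) ^ β) := by
      refine setLIntegral_congr_fun measurableSet_Ioc ?_
      rintro s ⟨hs0, hst⟩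
      beta_reduce
      rw [min_eq_left hst, abs_of_nonneg (sub_nonneg.2 hst)]
    have hvv : (t/2) ^ β * ((t/2) ^ (β+1) / (β+1)) = c₁ * t ^ (2*β+1) := by
      rw [hc₁, ← mul_div_assoc, ← Real.rpow_add ht2,
        (show β + (β+1) = 2*β+1 by ring), div_eq_mul_inv t 2,
        Real.mul_rpow ht.le (by norm_num)]
      ring
    have stepA1 : (∫⁻ s in Set.Ioc (0:ℝ) (t/2), ENNReal.ofReal (s ^ β * (t - s) ^ β))
        ≤ ENNReal.ofReal (c₁ * t ^ (2*β+1)) := by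
      have mono : ∀ s ∈ Set.Ioc (0:ℝ) (t/2), ENNReal.ofReal (s ^ β * (t - s) ^ β)
          ≤ ENNReal.ofReal ((t/2) ^ β) * ENNReal.ofReal (s ^ β) := by
        rintro s ⟨hs0, hs2⟩
        rw [← ENNReal.ofReal_mul (Real.rpow_nonneg ht2.le _)]
        refine ENNReal.ofReal_le_ofReal ?_
        rw [mul_comm ((t/2) ^ β) _]
        exact mul_le_mul_of_nonneg_left
          (Real.rpow_le_rpow_of_nonpos ht2 (by linarith) hβ0.le)
          (Real.rpow_nonneg hs0.le _)
      calc (∫⁻ s in Set.Ioc (0:ℝ) (t/2), ENNReal.ofReal (s ^ β * (t - s) ^ β))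
          ≤ ∫⁻ s in Set.Ioc (0:ℝ) (t/2),
              ENNReal.ofReal ((t/2) ^ β) * ENNReal.ofReal (s ^ β) :=
            setLIntegral_mono' measurableSet_Ioc mono
        _ = ENNReal.ofReal ((t/2) ^ β) * ENNReal.ofReal ((t/2) ^ (β+1) / (β+1)) := by
            rw [lintegral_const_mul' _ _ ENNReal.ofReal_ne_top, lint_rpow_Ioc hβ1 ht2.le]
        _ = ENNReal.ofReal ((t/2) ^ β * ((t/2) ^ (β+1) / (β+1))) :=
            (ENNReal.ofReal_mul (Real.rpow_nonneg ht2.le _)).symm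
        _ = ENNReal.ofReal (c₁ * t ^ (2*β+1)) := by rw [hvv]
    have stepA2 : (∫⁻ s in Set.Ioc (t/2) t, ENNReal.ofReal (s ^ β * (t - s) ^ β))
        ≤ ENNReal.ofReal (c₁ * t ^ (2*β+1)) := by
      have mono : ∀ s ∈ Set.Ioc (t/2) t, ENNReal.ofReal (s ^ β * (t - s) ^ β)
          ≤ ENNReal.ofReal ((t/2) ^ β) * ENNReal.ofReal ((t - s) ^ β) := by
        rintro s ⟨hs2, hst⟩
        rw [← ENNReal.ofReal_mul (Real.rpow_nonneg ht2.le _)]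
        refine ENNReal.ofReal_le_ofReal ?_
        exact mul_le_mul_of_nonneg_right
          (Real.rpow_le_rpow_of_nonpos ht2 hs2.le hβ0.le)
          (Real.rpow_nonneg (by linarith) _)
      calc (∫⁻ s in Set.Ioc (t/2) t, ENNReal.ofReal (s ^ β * (t - s) ^ β))
          ≤ ∫⁻ s in Set.Ioc (t/2) t,
              ENNReal.ofReal ((t/2) ^ β) * ENNReal.ofReal ((t - s) ^ β) :=
            setLIntegral_mono' measurableSet_Ioc mono
        _ = ENNReal.ofReal ((t/2) ^ β)
              * ENNReal.ofReal ((t - t/2) ^ (β+1) / (β+1)) := by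
            rw [lintegral_const_mul' _ _ ENNReal.ofReal_ne_top,
              lint_rpow_Ioc_sub_left hβ1 (half_le_self ht.le)]
        _ = ENNReal.ofReal ((t/2) ^ β * ((t/2) ^ (β+1) / (β+1))) := by
            rw [sub_half, ← ENNReal.ofReal_mul (Real.rpow_nonneg ht2.le _)]
        _ = ENNReal.ofReal (c₁ * t ^ (2*β+1)) := by rw [hvv]
    calc (∫⁻ s in Set.Ioc (0:ℝ) T,
          ENNReal.ofReal (|t ^ γ - s ^ γ| ^ 2 / |t - s| ^ (1 + 2 * σ)))
        ≤ ∫⁻ s in Set.Ioc (0:ℝ) T, ENNReal.ofReal (min s t ^ β * |t - s| ^ β) := step1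
      _ = (∫⁻ s in Set.Ioc (0:ℝ) t, ENNReal.ofReal (min s t ^ β * |t - s| ^ β))
          + ∫⁻ s in Set.Ioc t T, ENNReal.ofReal (min s t ^ β * |t - s| ^ β) := step2
      _ = ((∫⁻ s in Set.Ioc (0:ℝ) (t/2), ENNReal.ofReal (s ^ β * (t - s) ^ β))
          + ∫⁻ s in Set.Ioc (t/2) t, ENNReal.ofReal (s ^ β * (t - s) ^ β))
          + ∫⁻ s in Set.Ioc t T, ENNReal.ofReal (min s t ^ β * |t - s| ^ β) := by
          rw [congrA, ← Set.Ioc_union_Ioc_eq_Ioc ht2.le (half_le_self ht.le),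
            lintegral_union measurableSet_Ioc (Set.Ioc_disjoint_Ioc_of_le le_rfl)]
      _ ≤ (ENNReal.ofReal (c₁ * t ^ (2*β+1)) + ENNReal.ofReal (c₁ * t ^ (2*β+1)))
          + ENNReal.ofReal (t ^ β * c₂) :=
          add_le_add (add_le_add stepA1 stepA2) stepB
      _ = ENNReal.ofReal (2*c₁ * t ^ (2*β+1) + t ^ β * c₂) := by
          rw [← ENNReal.ofReal_add ha1 ha1, ← ENNReal.ofReal_add (add_nonneg ha1 ha1) hb1]
          congr 1
          ring
  have i1 : IntervalIntegrable (fun x : ℝ => x ^ (2*β+1)) volume 0 T :=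
    intervalIntegral.intervalIntegrable_rpow' (by rw [hβ] at hβ1 ⊢; linarith)
  have i2 : IntervalIntegrable (fun x : ℝ => x ^ β) volume 0 T :=
    intervalIntegral.intervalIntegrable_rpow' hβ1
  exact lt_of_le_of_lt (setLIntegral_mono' measurableSet_Ioc key)
    (lint_finite_of_integrableOn ((i1.const_mul (2*c₁)).add (i2.mul_const c₂)).1)
end
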